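/- arXiv:1204.5269 — 6 statements merged into one kernel-verified Lean document; each statement's English description precedes it below -/
import Mathlib

section
/- Every closed subgroup of the additive group ℂ is one of: the trivial group, ℝ·v for some nonzero v ∈ ℂ, ℤ·v for some nonzero v ∈ ℂ, ℤ·v ⊕ ℤ·w for ℝ-linearly independent v, w ∈ ℂ, ℝ·v ⊕ ℤ·w for ℝ-linearly independent v, w, or all of ℂ. -/
open Filter Topology

/-- The `ℝ`-linear "multiplication by `w`" map `ℝ →+ ℂ`, `t ↦ t • w`. -/
noncomputable def lineHom (w : ℂ) : ℝ →+ ℂ where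
  toFun t := t • w
  map_zero' := by simp
  map_add' s t := by simp [add_smul]

/-- Projection onto the imaginary coordinate in the basis `v, I*v`. -/
noncomputable def pim (v : ℂ) : ℂ →+ ℝ where
  toFun z := (z / v).im
  map_zero' := by simp
  map_add' z w := by simp [add_div]

lemma pim_apply (v z : ℂ) : pim v z = (z / v).im := rfl

lemma pim_cont (v : ℂ) : Continuous (pim v) :=
  Complex.continuous_im.comp (continuous_id.div_const v)

lemma pim_smul (v : ℂ) (t : ℝ) (z : ℂ) : pim v (t • z) = t * pim v z := by
  simp only [pim_apply, Complex.real_smul, mul_div_assoc, Complex.mul_im,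
    Complex.ofReal_re, Complex.ofReal_im, zero_mul, add_zero]

lemma pim_self (v : ℂ) : pim v v = 0 := by
  rcases eq_or_ne v 0 with rfl | hv
  · simp [pim_apply]
  · simp [pim_apply, div_self hv]

/-- Basis decomposition of `z` with respect to `v, I*v`. -/
lemma decomp {v : ℂ} (hv : v ≠ 0) (z : ℂ) :
    ((z / v).re : ℝ) • v + ((z / v).im : ℝ) • (Complex.I * v) = z := by
  rw [Complex.real_smul, Complex.real_smul]
  calc ((z/v).re : ℂ) * v + ((z/v).im : ℂ) * (Complex.I * v)
      = (((z/v).re : ℂ) + ((z/v).im : ℂ) * Complex.I) * v := by ring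
    _ = (z / v) * v := by rw [Complex.re_add_im]
    _ = z := div_mul_cancel₀ z hv

lemma norm_bound {v : ℂ} (hv : v ≠ 0) (z : ℂ) :
    ‖z‖ ≤ (|(z / v).re| + |(z / v).im|) * ‖v‖ := by
  conv_lhs => rw [← decomp hv z]
  calc ‖((z / v).re : ℝ) • v + ((z / v).im : ℝ) • (Complex.I * v)‖
      ≤ ‖((z / v).re : ℝ) • v‖ + ‖((z / v).im : ℝ) • (Complex.I * v)‖ := norm_add_le _ _
    _ = |(z / v).re| * ‖v‖ + |(z / v).im| * ‖v‖ := by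
        rw [norm_smul, norm_smul, Real.norm_eq_abs, Real.norm_eq_abs, norm_mul,
          Complex.norm_I, one_mul]
    _ = (|(z / v).re| + |(z / v).im|) * ‖v‖ := by ring

/-- Classification of closed subgroups of `ℝ`. -/
lemma real_closed_classify (K : AddSubgroup ℝ) (hK : IsClosed (K : Set ℝ)) :
    K = ⊥ ∨ K = ⊤ ∨ ∃ a : ℝ, a ≠ 0 ∧ K = AddSubgroup.zmultiples a := by
  rcases K.dense_or_cyclic with h | ⟨a, ha⟩
  · right; left
    have : (K : Set ℝ) = Set.univ := by rw [← hK.closure_eq, h.closure_eq]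
    exact SetLike.ext' this
  · rw [← AddSubgroup.zmultiples_eq_closure] at ha
    rcases eq_or_ne a 0 with rfl | h0
    · left; rw [ha, AddSubgroup.zmultiples_zero_eq_bot]
    · right; right; exact ⟨a, h0, ha⟩

/-- A subgroup of `ℝ` with no small nonzero elements is cyclic. -/
lemma real_discrete_cyclic (K : AddSubgroup ℝ) {ε : ℝ} (hε : 0 < ε)
    (h : ∀ x ∈ K, x ≠ 0 → ε ≤ |x|) :
    ∃ a : ℝ, K = AddSubgroup.zmultiples a := by
  rcases K.dense_or_cyclic with hd | ⟨a, ha⟩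
  · exfalso
    obtain ⟨x, hx, hdist⟩ := Metric.mem_closure_iff.mp
      (hd.closure_eq ▸ Set.mem_univ (ε/2)) (ε/2) (by linarith)
    have hxd : |ε/2 - x| < ε/2 := hdist
    have hx0 : x ≠ 0 := by
      intro h0; rw [h0] at hxd; simp at hxd; rw [abs_of_pos (by linarith)] at hxd; linarith
    have := h x hx hx0
    rw [abs_sub_lt_iff] at hxd
    rcases abs_cases x with ⟨he, _⟩ | ⟨he, _⟩ <;> linarith
  · exact ⟨a, by rw [ha, AddSubgroup.zmultiples_eq_closure]⟩

/-- A nondiscrete closed subgroup of `ℂ` contains a line. -/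
lemma line_of_nondiscrete (H : AddSubgroup ℂ) (hH : IsClosed (H : Set ℂ))
    (h : ∀ ε > 0, ∃ x ∈ H, x ≠ 0 ∧ ‖x‖ < ε) :
    ∃ u : ℂ, u ≠ 0 ∧ ∀ t : ℝ, t • u ∈ H := by
  have hx : ∀ n : ℕ, ∃ x : ℂ, x ∈ H ∧ x ≠ 0 ∧ ‖x‖ < 1 / (n + 1) := by
    intro n
    obtain ⟨x, h1, h2, h3⟩ := h (1 / (n + 1)) (by positivity)
    exact ⟨x, h1, h2, h3⟩
  choose x hxH hx0 hxn using hx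
  have hnorm : ∀ n, ‖x n‖ ≠ 0 := fun n => norm_ne_zero_iff.mpr (hx0 n)
  set u : ℕ → ℂ := fun n => ‖x n‖⁻¹ • x n with hu_def
  have hu_mem : ∀ n, u n ∈ Metric.sphere (0 : ℂ) 1 := by
    intro n
    simp [hu_def, norm_smul, abs_of_nonneg (norm_nonneg (x n)),
      inv_mul_cancel₀ (hnorm n)]
  obtain ⟨u₀, hu₀mem, φ, hφ, hφt⟩ := (isCompact_sphere (0:ℂ) 1).tendsto_subseq hu_mem
  have hu₀ : u₀ ≠ 0 := by
    intro h0
    rw [h0] at hu₀mem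
    simp at hu₀mem
  refine ⟨u₀, hu₀, fun t => ?_⟩
  have hxto : Tendsto (fun n => ‖x n‖) atTop (𝓝 0) := by
    apply squeeze_zero (fun n => norm_nonneg _) (fun n => (hxn n).le)
    exact tendsto_one_div_add_atTop_nhds_zero_nat
  have hxφ : Tendsto (fun n => ‖x (φ n)‖) atTop (𝓝 0) :=
    hxto.comp hφ.tendsto_atTop
  set c : ℕ → ℤ := fun n => ⌊t / ‖x (φ n)‖⌋ with hc_def
  set r : ℕ → ℝ := fun n => (c n : ℝ) * ‖x (φ n)‖ with hr_def
  have hrt : Tendsto r atTop (𝓝 t) := by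
    rw [← tendsto_sub_nhds_zero_iff]
    refine squeeze_zero_norm ?_ hxφ
    intro n
    have hne := hnorm (φ n)
    have h1 : r n - t = (((c n : ℝ)) - t / ‖x (φ n)‖) * ‖x (φ n)‖ := by
      rw [sub_mul, div_mul_cancel₀ t hne]
    rw [Real.norm_eq_abs, h1, abs_mul, abs_of_nonneg (norm_nonneg _)]
    have h2 : |((c n : ℝ)) - t / ‖x (φ n)‖| ≤ 1 := by
      rw [abs_le]
      constructor
      · have := Int.sub_one_lt_floor (t / ‖x (φ n)‖)
        simp only [hc_def]
        linarith
      · have := Int.floor_le (t / ‖x (φ n)‖)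
        simp only [hc_def]
        linarith
    nlinarith [norm_nonneg (x (φ n))]
  have hyH : ∀ n, r n • u (φ n) ∈ H := by
    intro n
    have : r n • u (φ n) = c n • x (φ n) := by
      rw [hu_def]
      simp only [smul_smul, hr_def]
      rw [mul_inv_cancel_right₀ (hnorm (φ n))]
      exact (Int.cast_smul_eq_zsmul ℝ (c n) (x (φ n)))
    rw [this]
    exact zsmul_mem (hxH (φ n)) _
  have htend : Tendsto (fun n => r n • u (φ n)) atTop (𝓝 (t • u₀)) :=
    hrt.smul hφt
  have : t • u₀ ∈ closure (H : Set ℂ) :=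
    mem_closure_of_tendsto htend (Eventually.of_forall hyH)
  rwa [hH.closure_eq] at this

/-- A subgroup with separated elements has discrete topology (as a set). -/
lemma discrete_of_sep (H : AddSubgroup ℂ) {ε : ℝ} (hε : 0 < ε)
    (h : ∀ x ∈ H, x ≠ 0 → ε ≤ ‖x‖) : DiscreteTopology ((H : Set ℂ) : Set ℂ) := by
  rw [discreteTopology_iff_isOpen_singleton]
  rintro ⟨x, hx⟩
  rw [isOpen_induced_iff]
  refine ⟨Metric.ball x ε, Metric.isOpen_ball, ?_⟩
  ext ⟨y, hy⟩
  simp only [Set.mem_preimage, Metric.mem_ball, Set.mem_singleton_iff, Subtype.ext_iff]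
  constructor
  · intro hd
    by_contra hne
    have hyx : y - x ∈ H := sub_mem hy hx
    have : ε ≤ ‖y - x‖ := h _ hyx (sub_ne_zero.mpr hne)
    rw [dist_eq_norm] at hd
    linarith
  · rintro rfl; simpa using hε

/-- A finite set of nonzero reals is bounded away from zero. -/
lemma finite_sep {S : Set ℝ} (hS : S.Finite) (h0 : (0:ℝ) ∉ S) :
    ∃ δ > 0, ∀ s ∈ S, δ ≤ |s| := by
  classical
  have hT : (insert (1:ℝ) (abs '' S)).Finite := Set.Finite.insert _ (hS.image _)
  have hne : hT.toFinset.Nonempty := by simp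
  refine ⟨hT.toFinset.min' hne, ?_, ?_⟩
  · have hmem := hT.toFinset.min'_mem hne
    rw [Set.Finite.mem_toFinset] at hmem
    rcases hmem with h1 | ⟨s, hs, habs⟩
    · rw [h1]; norm_num
    · rw [← habs]
      rcases eq_or_ne s 0 with rfl | hs0
      · exact absurd hs h0
      · exact abs_pos.mpr hs0
  · intro s hs
    apply hT.toFinset.min'_le
    rw [Set.Finite.mem_toFinset]
    exact Or.inr ⟨s, hs, rfl⟩

lemma pim_I {v : ℂ} (hv : v ≠ 0) : pim v (Complex.I * v) = 1 := by
  rw [pim_apply, mul_div_assoc, div_self hv, mul_one, Complex.I_im]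

lemma im_smul_eq {v : ℂ} (hv : v ≠ 0) (z : ℂ) :
    ((z / v).im : ℝ) • (Complex.I * v) = z - ((z / v).re : ℝ) • v := by
  rw [eq_sub_iff_add_eq, add_comm]
  exact decomp hv z

lemma zsmul_real (n : ℤ) (a : ℝ) (x : ℂ) : n • (a • x) = ((n : ℝ) * a) • x := by
  rw [← Int.cast_smul_eq_zsmul ℝ n (a • x), smul_smul]

lemma floor_mod_bound (c a : ℝ) (ha : a ≠ 0) : |c - (⌊c / a⌋ : ℝ) * a| ≤ |a| := by
  have h := Int.floor_le (c / a)
  have h2 := Int.sub_one_lt_floor (c / a)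
  have he : c - (⌊c / a⌋ : ℝ) * a = (c / a - ⌊c / a⌋) * a := by
    rw [sub_mul, div_mul_cancel₀ c ha]
  rw [he, abs_mul]
  have h3 : |c / a - ⌊c / a⌋| ≤ 1 := by rw [abs_le]; constructor <;> linarith
  calc |c / a - ⌊c / a⌋| * |a| ≤ 1 * |a| := mul_le_mul_of_nonneg_right h3 (abs_nonneg a)
    _ = |a| := one_mul _

lemma sub_smul_div {v : ℂ} (hv : v ≠ 0) (z : ℂ) (b : ℝ) :
    (z - b • v) / v = z / v - (b : ℂ) := by
  rw [sub_div, Complex.real_smul, mul_div_assoc, div_self hv, mul_one]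

/-- Every closed subgroup of the additive group `ℂ` is one of: the trivial group, `ℝ·v`
for some `v ≠ 0`, `ℤ·v` for some `v ≠ 0`, `ℤ·v ⊕ ℤ·w` for `ℝ`-linearly independent `v, w`,
`ℝ·v ⊕ ℤ·w` for `ℝ`-linearly independent `v, w`, or all of `ℂ`. -/
theorem stmt5 (H : AddSubgroup ℂ) (hH : IsClosed (H : Set ℂ)) :
    H = ⊥ ∨
    (∃ v : ℂ, v ≠ 0 ∧ H = (Submodule.span ℝ {v}).toAddSubgroup) ∨
    (∃ v : ℂ, v ≠ 0 ∧ H = AddSubgroup.zmultiples v) ∨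
    (∃ v w : ℂ, LinearIndependent ℝ ![v, w] ∧
      H = AddSubgroup.zmultiples v ⊔ AddSubgroup.zmultiples w) ∨
    (∃ v w : ℂ, LinearIndependent ℝ ![v, w] ∧
      H = (Submodule.span ℝ {v}).toAddSubgroup ⊔ AddSubgroup.zmultiples w) ∨
    H = ⊤ := by
  by_cases hbot : H = ⊥
  · exact Or.inl hbot
  have hvex : ∃ v ∈ H, v ≠ (0 : ℂ) := by
    by_contra hc
    push_neg at hc
    exact hbot ((AddSubgroup.eq_bot_iff_forall H).mpr hc)
  by_cases hline : ∃ u : ℂ, u ≠ 0 ∧ ∀ t : ℝ, t • u ∈ H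
  · -- H contains a line ℝ·u
    obtain ⟨u, hu0, huH⟩ := hline
    set K : AddSubgroup ℝ := H.comap (lineHom (Complex.I * u)) with hK_def
    have hKmem : ∀ t : ℝ, t ∈ K ↔ t • (Complex.I * u) ∈ H := fun t => Iff.rfl
    have hKc : IsClosed (K : Set ℝ) := by
      have : (K : Set ℝ) = (fun t : ℝ => t • (Complex.I * u)) ⁻¹' (H : Set ℂ) := rfl
      rw [this]
      exact hH.preimage (continuous_id.smul continuous_const)
    -- key: membership in K of the I-coordinate
    have hcoord : ∀ z ∈ H, (z / u).im ∈ K := by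
      intro z hz
      rw [hKmem, im_smul_eq hu0 z]
      exact sub_mem hz (huH _)
    rcases real_closed_classify K hKc with hKb | hKt | ⟨a, ha0, hKa⟩
    · -- H = span ℝ {u}
      right; left
      refine ⟨u, hu0, ?_⟩
      ext z
      rw [Submodule.mem_toAddSubgroup, Submodule.mem_span_singleton]
      constructor
      · intro hz
        have him := hcoord z hz
        rw [hKb, AddSubgroup.mem_bot] at him
        refine ⟨(z / u).re, ?_⟩
        have := decomp hu0 z
        rw [him, zero_smul, add_zero] at this
        exact this
      · rintro ⟨t, rfl⟩
        exact huH t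
    · -- H = ⊤
      right; right; right; right; right
      ext z
      simp only [AddSubgroup.mem_top, iff_true]
      have h1 : ((z / u).re : ℝ) • u ∈ H := huH _
      have h2 : ((z / u).im : ℝ) • (Complex.I * u) ∈ H := by
        rw [← hKmem]
        rw [hKt]
        exact AddSubgroup.mem_top _
      have := add_mem h1 h2
      rwa [decomp hu0 z] at this
    · -- H = span ℝ {u} ⊔ ℤ·(a • (I*u))
      right; right; right; right; left
      have hIu0 : Complex.I * u ≠ 0 := mul_ne_zero Complex.I_ne_zero hu0
      have haIu0 : a • (Complex.I * u) ≠ 0 := smul_ne_zero ha0 hIu0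
      refine ⟨u, a • (Complex.I * u), ?_, ?_⟩
      · rw [linearIndependent_fin2]
        refine ⟨by simpa using haIu0, fun s hs => ?_⟩
        have hcongr := congrArg (pim u) hs
        simp only [Matrix.cons_val_one, Matrix.head_cons, Matrix.cons_val_zero] at hcongr
        rw [pim_smul, pim_smul, pim_I hu0, pim_self] at hcongr
        have hsa : s * (a * 1) = 0 := hcongr
        have hs0 : s = 0 := by
          rcases mul_eq_zero.mp hsa with h | h
          · exact h
          · simp [ha0] at h
        rw [hs0, zero_smul] at hs
        simp only [Matrix.cons_val_zero] at hs
        exact hu0 hs.symm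
      · ext z
        constructor
        · intro hz
          have him := hcoord z hz
          rw [hKa] at him
          obtain ⟨n, hn⟩ := AddSubgroup.mem_zmultiples_iff.mp him
          rw [AddSubgroup.mem_sup]
          refine ⟨((z / u).re : ℝ) • u, ?_, n • (a • (Complex.I * u)), ?_, ?_⟩
          · rw [Submodule.mem_toAddSubgroup]
            exact Submodule.smul_mem _ _ (Submodule.mem_span_singleton_self u)
          · exact zsmul_mem (AddSubgroup.mem_zmultiples _) n
          · rw [zsmul_real, ← zsmul_eq_mul]
            rw [show ((n • a : ℝ)) = (z / u).im from hn]
            exact decomp hu0 z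
        · intro hz
          rw [AddSubgroup.mem_sup] at hz
          obtain ⟨y, hy, w', hw', rfl⟩ := hz
          rw [Submodule.mem_toAddSubgroup, Submodule.mem_span_singleton] at hy
          obtain ⟨t, rfl⟩ := hy
          obtain ⟨k, rfl⟩ := AddSubgroup.mem_zmultiples_iff.mp hw'
          refine add_mem (huH t) (zsmul_mem ?_ k)
          rw [← hKmem]
          rw [hKa]
          exact AddSubgroup.mem_zmultiples a
  · -- H contains no line: discrete case
    have hsepex : ∃ ε > 0, ∀ x ∈ H, x ≠ 0 → ε ≤ ‖x‖ := by
      by_contra hc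
      push_neg at hc
      exact hline (line_of_nondiscrete H hH hc)
    obtain ⟨ε, hε, hsepH⟩ := hsepex
    obtain ⟨v, hvH, hv0⟩ := hvex
    have hnv : (0 : ℝ) < ‖v‖ := norm_pos_iff.mpr hv0
    set K1 : AddSubgroup ℝ := H.comap (lineHom v) with hK1_def
    have hK1mem : ∀ t : ℝ, t ∈ K1 ↔ t • v ∈ H := fun t => Iff.rfl
    have hK1sep : ∀ t ∈ K1, t ≠ 0 → ε / ‖v‖ ≤ |t| := by
      intro t ht ht0
      have h1 : t • v ∈ H := ht
      have h2 : t • v ≠ 0 := smul_ne_zero ht0 hv0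
      have h3 := hsepH _ h1 h2
      rw [norm_smul, Real.norm_eq_abs] at h3
      rw [div_le_iff₀ hnv]
      linarith
    obtain ⟨a, hK1a⟩ := real_discrete_cyclic K1 (div_pos hε hnv) hK1sep
    have h1K1 : (1 : ℝ) ∈ K1 := by rw [hK1mem, one_smul]; exact hvH
    have ha0 : a ≠ 0 := by
      rintro rfl
      rw [hK1a, AddSubgroup.zmultiples_zero_eq_bot, AddSubgroup.mem_bot] at h1K1
      exact one_ne_zero h1K1
    set v₀ : ℂ := a • v with hv₀_def
    have hv₀H : v₀ ∈ H := by
      have : a ∈ K1 := hK1a ▸ AddSubgroup.mem_zmultiples a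
      exact this
    have hv₀0 : v₀ ≠ 0 := smul_ne_zero ha0 hv0
    have hpimv₀ : pim v v₀ = 0 := by
      rw [hv₀_def, pim_smul, pim_self, mul_zero]
    -- key: elements with zero imaginary coordinate are ℤ·v₀
    have hker : ∀ z ∈ H, (z / v).im = 0 → ∃ m : ℤ, m • v₀ = z := by
      intro z hz him
      have hz' : z = ((z / v).re : ℝ) • v := by
        have := decomp hv0 z
        rw [him, zero_smul, add_zero] at this
        exact this.symm
      have ht : (z / v).re ∈ K1 := by rw [hK1mem, ← hz']; exact hz
      rw [hK1a] at ht
      obtain ⟨m, hm⟩ := AddSubgroup.mem_zmultiples_iff.mp ht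
      refine ⟨m, ?_⟩
      rw [hv₀_def, zsmul_real, ← zsmul_eq_mul, hm, ← hz']
    by_cases hsub : ∀ z ∈ H, (z / v).im = 0
    · -- H = ℤ·v₀
      right; right; left
      refine ⟨v₀, hv₀0, ?_⟩
      ext z
      rw [AddSubgroup.mem_zmultiples_iff]
      constructor
      · intro hz
        obtain ⟨m, hm⟩ := hker z hz (hsub z hz)
        exact ⟨m, hm⟩
      · rintro ⟨n, rfl⟩
        exact zsmul_mem hv₀H n
    · -- rank 2 discrete case
      push_neg at hsub
      obtain ⟨w, hwH, hw0⟩ := hsub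
      set K2 : AddSubgroup ℝ := H.map (pim v) with hK2_def
      haveI hdisc : DiscreteTopology ((H : Set ℂ) : Set ℂ) := discrete_of_sep H hε hsepH
      set R : ℝ := (|a| + 1) * ‖v‖ with hR_def
      have hFfin : (Metric.closedBall (0:ℂ) R ∩ (H : Set ℂ)).Finite :=
        Metric.finite_isBounded_inter_isClosed (isDiscrete_iff_discreteTopology.mpr hdisc) Metric.isBounded_closedBall hH
      set S : Set ℝ := {s : ℝ | s ≠ 0 ∧ ∃ z ∈ Metric.closedBall (0:ℂ) R ∩ (H : Set ℂ), pim v z = s}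
        with hS_def
      have hSfin : S.Finite := by
        refine (hFfin.image (pim v)).subset ?_
        rintro s ⟨hs0, z, hz, hzs⟩
        exact ⟨z, hz, hzs⟩
      have h0S : (0 : ℝ) ∉ S := fun h => h.1 rfl
      obtain ⟨δ, hδ, hδS⟩ := finite_sep hSfin h0S
      have hK2sep : ∀ s ∈ K2, s ≠ 0 → min δ 1 ≤ |s| := by
        intro s hs hs0
        rcases le_or_gt 1 |s| with h1 | h1
        · exact le_trans (min_le_right δ 1) h1
        · obtain ⟨z, hzH, hzs⟩ := AddSubgroup.mem_map.mp hs
          set m : ℤ := ⌊(z / v).re / a⌋ with hm_def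
          set z' : ℂ := z - ((m : ℝ) * a) • v with hz'_def
          have hz'H : z' ∈ H := by
            rw [hz'_def]
            refine sub_mem hzH ?_
            rw [← zsmul_real]
            exact zsmul_mem hv₀H m
          have hz'div : z' / v = z / v - ((m : ℝ) * a : ℝ) := by
            rw [hz'_def]
            exact sub_smul_div hv0 z ((m : ℝ) * a)
          have hz'im : (z' / v).im = s := by
            rw [hz'div, Complex.sub_im, Complex.ofReal_im, sub_zero, ← pim_apply, hzs]
          have hz're : |(z' / v).re| ≤ |a| := by
            rw [hz'div, Complex.sub_re, Complex.ofReal_re, ← pim_apply] at *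
            exact floor_mod_bound ((z/v).re) a ha0
          have hz'norm : ‖z'‖ ≤ R := by
            calc ‖z'‖ ≤ (|(z' / v).re| + |(z' / v).im|) * ‖v‖ := norm_bound hv0 z'
              _ ≤ (|a| + 1) * ‖v‖ := by
                  apply mul_le_mul_of_nonneg_right _ (norm_nonneg v)
                  rw [hz'im]
                  linarith
              _ = R := rfl
          have hsS : s ∈ S := by
            refine ⟨hs0, z', ⟨?_, hz'H⟩, ?_⟩
            · rw [Metric.mem_closedBall, dist_zero_right]
              exact hz'norm
            · rw [pim_apply, hz'im]
          exact le_trans (min_le_left δ 1) (hδS s hsS)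
      obtain ⟨b, hK2b⟩ := real_discrete_cyclic K2 (lt_min hδ one_pos) hK2sep
      have hwK2 : (w / v).im ∈ K2 := AddSubgroup.mem_map.mpr ⟨w, hwH, rfl⟩
      have hb0 : b ≠ 0 := by
        rintro rfl
        rw [hK2b, AddSubgroup.zmultiples_zero_eq_bot, AddSubgroup.mem_bot] at hwK2
        exact hw0 hwK2
      have hbK2 : b ∈ K2 := hK2b ▸ AddSubgroup.mem_zmultiples b
      obtain ⟨w₀, hw₀H, hw₀b⟩ := AddSubgroup.mem_map.mp hbK2
      have hw₀0 : w₀ ≠ 0 := by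
        rintro rfl
        rw [map_zero] at hw₀b
        exact hb0 hw₀b.symm
      right; right; right; left
      refine ⟨v₀, w₀, ?_, ?_⟩
      · rw [linearIndependent_fin2]
        refine ⟨by simpa using hw₀0, fun s hs => ?_⟩
        simp only [Matrix.cons_val_one, Matrix.head_cons, Matrix.cons_val_zero] at hs
        have hcongr := congrArg (pim v) hs
        rw [pim_smul, hw₀b, hpimv₀] at hcongr
        have hs0 : s = 0 := by
          rcases mul_eq_zero.mp hcongr with h | h
          · exact h
          · exact absurd h hb0
        rw [hs0, zero_smul] at hs
        exact hv₀0 hs.symm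
      · ext z
        constructor
        · intro hz
          have hsK2 : pim v z ∈ K2 := AddSubgroup.mem_map.mpr ⟨z, hz, rfl⟩
          rw [hK2b] at hsK2
          obtain ⟨n, hn⟩ := AddSubgroup.mem_zmultiples_iff.mp hsK2
          set z₁ : ℂ := z - n • w₀ with hz₁_def
          have hz₁H : z₁ ∈ H := sub_mem hz (zsmul_mem hw₀H n)
          have hz₁im : (z₁ / v).im = 0 := by
            have : pim v z₁ = pim v z - n • (pim v w₀) := by
              rw [hz₁_def, map_sub, map_zsmul]
            rw [pim_apply] at this
            rw [this, hw₀b, hn, sub_self]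
          obtain ⟨m, hm⟩ := hker z₁ hz₁H hz₁im
          rw [AddSubgroup.mem_sup]
          refine ⟨m • v₀, zsmul_mem (AddSubgroup.mem_zmultiples v₀) m,
            n • w₀, zsmul_mem (AddSubgroup.mem_zmultiples w₀) n, ?_⟩
          rw [hm, hz₁_def]
          ring
        · intro hz
          rw [AddSubgroup.mem_sup] at hz
          obtain ⟨y, hy, w', hw', rfl⟩ := hz
          obtain ⟨k, rfl⟩ := AddSubgroup.mem_zmultiples_iff.mp hy
          obtain ⟨l, rfl⟩ := AddSubgroup.mem_zmultiples_iff.mp hw'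
          exact add_mem (zsmul_mem hv₀H k) (zsmul_mem hw₀H l)
end

section
/- The Chabauty space of closed subgroups of a locally compact topological group is compact. -/
open Filter Topology
/-- The Chabauty (Fell) topology on subsets of `G`: generated by the sets
`{S | S ∩ K = ∅}` for `K` compact and `{S | S ∩ U ≠ ∅}` for `U` open. -/
def chabautyTopSet (G : Type*) [TopologicalSpace G] : TopologicalSpace (Set G) :=
  TopologicalSpace.generateFrom
    ({ A | ∃ K : Set G, IsCompact K ∧ A = {S : Set G | S ∩ K = ∅} } ∪
     { A | ∃ U : Set G, IsOpen U ∧ A = {S : Set G | (S ∩ U).Nonempty} })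

/-- The space of closed subgroups of a topological group `G`. -/
def ClosedSubgroups (G : Type*) [Group G] [TopologicalSpace G] :=
  {H : Subgroup G // IsClosed (H : Set G)}

/-- The Chabauty topology on the space of closed subgroups. -/
instance (G : Type*) [Group G] [TopologicalSpace G] : TopologicalSpace (ClosedSubgroups G) :=
  TopologicalSpace.induced (fun H : ClosedSubgroups G => ((H.1 : Subgroup G) : Set G))
    (chabautyTopSet G)

/-- The space of closed additive subgroups of a topological additive group `G`. -/
def ClosedAddSubgroups (G : Type*) [AddGroup G] [TopologicalSpace G] :=
  {H : AddSubgroup G // IsClosed (H : Set G)}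

/-- The Chabauty topology on the space of closed additive subgroups. -/
instance (G : Type*) [AddGroup G] [TopologicalSpace G] :
    TopologicalSpace (ClosedAddSubgroups G) :=
  TopologicalSpace.induced (fun H : ClosedAddSubgroups G => ((H.1 : AddSubgroup G) : Set G))
    (chabautyTopSet G)

/-- Sequential Chabauty convergence of a sequence of (closed) subsets `H n` to `L`:
(1) every point of `L` is a limit of points `h n ∈ H n`, and
(2) every cluster point of any sequence of points `h n ∈ H n` belongs to `L`. -/
def ChabConvSeq {G : Type*} [TopologicalSpace G] (H : ℕ → Set G) (L : Set G) : Prop :=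
  (∀ h ∈ L, ∃ u : ℕ → G, (∀ n, u n ∈ H n) ∧ Filter.Tendsto u Filter.atTop (nhds h)) ∧
  (∀ u : ℕ → G, (∀ n, u n ∈ H n) → ∀ x : G, MapClusterPt x Filter.atTop u → x ∈ L)

/-- The Chabauty space of closed subgroups of a locally compact group is compact. -/
theorem stmt9 {G : Type*} [Group G] [TopologicalSpace G] [IsTopologicalGroup G]
    [LocallyCompactSpace G] :
    CompactSpace (ClosedSubgroups G) := by
  constructor
  rw [isCompact_iff_ultrafilter_le_nhds]
  intro F _
  set ι : ClosedSubgroups G → Set G :=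
    fun H : ClosedSubgroups G => ((H.1 : Subgroup G) : Set G) with hι
  set L : Set G :=
    {x | ∀ U ∈ 𝓝 x, {H : ClosedSubgroups G | (ι H ∩ U).Nonempty} ∈ F} with hLdef
  -- L is closed
  have hLclosed : IsClosed L := by
    rw [← isOpen_compl_iff, isOpen_iff_mem_nhds]
    intro x hx
    simp only [hLdef, Set.mem_compl_iff, Set.mem_setOf_eq, not_forall] at hx
    obtain ⟨U, hU, hUF⟩ := hx
    refine Filter.mem_of_superset (interior_mem_nhds.2 hU) ?_
    intro y hy hyL
    exact hUF (Filter.mem_of_superset (hyL (interior U) (isOpen_interior.mem_nhds hy))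
      (fun H hH => hH.mono (Set.inter_subset_inter_right _ interior_subset)))
  have one_mem : (1 : G) ∈ L := by
    intro U hU
    exact Filter.mem_of_superset Filter.univ_mem
      (fun H _ => ⟨1, H.1.one_mem, mem_of_mem_nhds hU⟩)
  have mul_mem : ∀ {x y : G}, x ∈ L → y ∈ L → x * y ∈ L := by
    intro x y hx hy U hU
    have h : (fun p : G × G => p.1 * p.2) ⁻¹' U ∈ 𝓝 (x, y) := continuous_mul.tendsto (x, y) hU
    rw [nhds_prod_eq, Filter.mem_prod_iff] at h
    obtain ⟨V, hV, W, hW, hVW⟩ := h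
    refine Filter.mem_of_superset (Filter.inter_mem (hx V hV) (hy W hW)) ?_
    rintro H ⟨⟨a, haH, haV⟩, ⟨b, hbH, hbW⟩⟩
    exact ⟨a * b, H.1.mul_mem haH hbH, hVW (Set.mk_mem_prod haV hbW)⟩
  have inv_mem : ∀ {x : G}, x ∈ L → x⁻¹ ∈ L := by
    intro x hx U hU
    have h : (fun a : G => a⁻¹) ⁻¹' U ∈ 𝓝 x := continuous_inv.tendsto x hU
    refine Filter.mem_of_superset (hx _ h) ?_
    rintro H ⟨a, haH, haU⟩
    exact ⟨a⁻¹, H.1.inv_mem haH, haU⟩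
  let Lsub : Subgroup G :=
    { carrier := L, one_mem' := one_mem, mul_mem' := mul_mem, inv_mem' := inv_mem }
  refine ⟨⟨Lsub, hLclosed⟩, Set.mem_univ _, ?_⟩
  show ↑F ≤ @nhds _ (TopologicalSpace.induced ι (chabautyTopSet G)) ⟨Lsub, hLclosed⟩
  erw [@nhds_induced _ _ (chabautyTopSet G) ι, ← Filter.map_le_iff_le_comap]
  have : ι (⟨Lsub, hLclosed⟩ : ClosedSubgroups G) = L := rfl
  rw [this, chabautyTopSet, TopologicalSpace.nhds_generateFrom]
  refine le_iInf fun s => le_iInf fun hs => ?_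
  rw [Filter.le_principal_iff, Filter.mem_map]
  obtain ⟨hLs, hsub⟩ := hs
  rcases hsub with ⟨K, hK, rfl⟩ | ⟨U, hU, rfl⟩
  · -- s = {S | S ∩ K = ∅}, and L ∩ K = ∅
    have hLK : L ∩ K = ∅ := hLs
    have hx : ∀ x, x ∈ K → ∃ V : Set G, IsOpen V ∧ x ∈ V ∧
        {H : ClosedSubgroups G | (ι H ∩ V).Nonempty} ∉ F := by
      intro x hxK
      have hxL : x ∉ L := fun h => Set.eq_empty_iff_forall_notMem.1 hLK x ⟨h, hxK⟩
      simp only [hLdef, Set.mem_setOf_eq, not_forall] at hxL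
      obtain ⟨U, hU, hUF⟩ := hxL
      exact ⟨interior U, isOpen_interior, mem_interior_iff_mem_nhds.2 hU,
        fun h => hUF (Filter.mem_of_superset h
          (fun H hH => hH.mono (Set.inter_subset_inter_right _ interior_subset)))⟩
    choose V hVopen hxV hVF using hx
    obtain ⟨t, ht⟩ := hK.elim_nhds_subcover' (fun x hx => V x hx)
      (fun x hx => (hVopen x hx).mem_nhds (hxV x hx))
    have hA : (⋂ x ∈ t, {H : ClosedSubgroups G | ι H ∩ V x.1 x.2 = ∅}) ∈ F := by
      refine (Filter.biInter_finset_mem t).2 fun x _ => ?_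
      have := Ultrafilter.compl_mem_iff_notMem.2 (hVF x.1 x.2)
      refine Filter.mem_of_superset this ?_
      intro H hH
      exact Set.not_nonempty_iff_eq_empty.1 hH
    refine Filter.mem_of_superset hA ?_
    intro H hH
    show ι H ∩ K = ∅
    rw [Set.eq_empty_iff_forall_notMem]
    rintro a ⟨haH, haK⟩
    obtain ⟨x, hxt, hax⟩ : ∃ x ∈ t, a ∈ V x.1 x.2 := by
      have := ht haK
      simpa using this
    have h1 : ι H ∩ V x.1 x.2 = ∅ := by
      simp only [Set.mem_iInter] at hH
      exact hH x hxt
    exact Set.eq_empty_iff_forall_notMem.1 h1 a ⟨haH, hax⟩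
  · -- s = {S | (S ∩ U).Nonempty}
    obtain ⟨x, hxL, hxU⟩ : (L ∩ U).Nonempty := hLs
    exact hxL U (hU.mem_nhds hxU)
end

section
/- If a sequence of lattices Λ_n = ℤv_n ⊕ ℤw_n in ℂ satisfies v_n → v ≠ 0 and |w_n| → ∞ with w_n/|w_n| having no accumulation in ℝv/|v| directions forcing degeneracy, then Λ_n converges in the Chabauty topology to the closed subgroup ℤv. -/
open Filter Topology
/-- If a sequence of lattices `Λ n = ℤ v n ⊕ ℤ w n` in `ℂ` satisfies `v n → v ≠ 0` and
`‖w n‖ → ∞`, with the directions `w n / ‖w n‖` having no accumulation point on the real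
line `ℝ v` (which would force degeneracy), then `Λ n` converges in the Chabauty topology
to the closed subgroup `ℤ v`. -/
theorem stmt11 (v w : ℕ → ℂ) (v₀ : ℂ)
    (hlat : ∀ n, LinearIndependent ℝ ![v n, w n])
    (hv : Filter.Tendsto v Filter.atTop (nhds v₀)) (hv₀ : v₀ ≠ 0)
    (hw : Filter.Tendsto (fun n => ‖w n‖) Filter.atTop Filter.atTop)
    (hdir : ∀ u : ℂ, MapClusterPt u Filter.atTop (fun n => w n / (‖w n‖ : ℂ)) →
      u ∉ Submodule.span ℝ ({v₀} : Set ℂ)) :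
    ChabConvSeq
      (fun n => ((AddSubgroup.zmultiples (v n) ⊔ AddSubgroup.zmultiples (w n)) : Set ℂ))
      ((AddSubgroup.zmultiples v₀ : AddSubgroup ℂ) : Set ℂ) := by
  have hvne : ∀ n, v n ≠ 0 := fun n => by simpa using (hlat n).ne_zero 0
  have hwne : ∀ n, w n ≠ 0 := fun n => by simpa using (hlat n).ne_zero 1
  constructor
  · -- part 1
    intro h hh
    obtain ⟨k, hk⟩ := AddSubgroup.mem_zmultiples_iff.mp (SetLike.mem_coe.mp hh)
    refine ⟨fun n => k • v n, fun n => ?_, ?_⟩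
    · simp only [Set.sup_eq_union, Set.mem_union, SetLike.mem_coe,
        AddSubgroup.mem_zmultiples_iff]
      exact Or.inl ⟨k, rfl⟩
    · have h1 : Filter.Tendsto (fun n => (k : ℂ) * v n) atTop (nhds ((k : ℂ) * v₀)) :=
        hv.const_mul _
      rw [← hk]
      simpa [zsmul_eq_mul] using h1
  · -- part 2
    intro u hu x hx
    have hmem : ∀ n, ∃ a b : ℤ, (a : ℂ) * v n + (b : ℂ) * w n = u n := by
      intro n
      have h := hu n
      simp only [Set.sup_eq_union, Set.mem_union, SetLike.mem_coe,
        AddSubgroup.mem_zmultiples_iff] at h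
      rcases h with ⟨a, ha⟩ | ⟨b, hb⟩
      · exact ⟨a, 0, by rw [← ha]; push_cast; rw [zsmul_eq_mul]; ring⟩
      · exact ⟨0, b, by rw [← hb]; push_cast; rw [zsmul_eq_mul]; ring⟩
    choose a b hab using hmem
    obtain ⟨φ, hφ, hφx⟩ := TopologicalSpace.FirstCountableTopology.tendsto_subseq hx
    -- claim: eventually b (φ n) = 0
    have hb0 : ∀ᶠ n in atTop, b (φ n) = 0 := by
      by_contra hb
      rw [Filter.not_eventually] at hb
      obtain ⟨ψ, hψ, hbψ⟩ := Filter.extraction_of_frequently_atTop hb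
      set σ : ℕ → ℕ := φ ∘ ψ with hσ
      have hσmono : StrictMono σ := hφ.comp hψ
      have huσ : Filter.Tendsto (fun n => u (σ n)) atTop (nhds x) := hφx.comp hψ.tendsto_atTop
      set d : ℕ → ℂ := fun n => w n / (‖w n‖ : ℂ) with hd
      have hdball : ∀ n, d (σ n) ∈ Metric.closedBall (0 : ℂ) 1 := by
        intro n
        simp only [Metric.mem_closedBall, dist_zero_right, hd]
        rw [norm_div]
        simp [hwne (σ n)]
      obtain ⟨u₁, -, ρ, hρ, hdρ⟩ :=
        tendsto_subseq_of_bounded Metric.isBounded_closedBall hdball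
      set τ : ℕ → ℕ := σ ∘ ρ with hτ
      have hτat : Filter.Tendsto τ atTop atTop := (hσmono.comp hρ).tendsto_atTop
      have hbτ : ∀ n, b (τ n) ≠ 0 := fun n => hbψ (ρ n)
      have huτ : Filter.Tendsto (fun n => u (τ n)) atTop (nhds x) := huσ.comp hρ.tendsto_atTop
      have hwτ : Filter.Tendsto (fun n => ‖w (τ n)‖) atTop atTop := hw.comp hτat
      set e : ℕ → ℂ := fun n => (b (τ n) : ℂ) * (‖w (τ n)‖ : ℂ) with he
      have hwcne : ∀ n, ((‖w (τ n)‖ : ℝ) : ℂ) ≠ 0 := fun n => by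
        exact_mod_cast norm_ne_zero_iff.mpr (hwne (τ n))
      have hbcne : ∀ n, ((b (τ n) : ℤ) : ℂ) ≠ 0 := fun n => by exact_mod_cast hbτ n
      have hene : ∀ n, e n ≠ 0 := fun n =>
        mul_ne_zero (hbcne n) (hwcne n)
      have henorm : Filter.Tendsto (fun n => ‖e n‖) atTop atTop := by
        apply tendsto_atTop_mono _ hwτ
        intro n
        simp only [he, norm_mul, Complex.norm_real, norm_norm]
        have h1 : (1 : ℝ) ≤ ‖((b (τ n) : ℤ) : ℂ)‖ := by
          rw [Complex.norm_intCast]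
          exact_mod_cast Int.one_le_abs (hbτ n)
        nlinarith [norm_nonneg (w (τ n))]
      have hue0 : Filter.Tendsto (fun n => u (τ n) / e n) atTop (nhds 0) := by
        rw [tendsto_zero_iff_norm_tendsto_zero]
        simp only [norm_div]
        exact Filter.Tendsto.div_atTop (huτ.norm) henorm
      set c : ℕ → ℂ := fun n => (a (τ n) : ℂ) / e n with hc
      have hkey : ∀ n, u (τ n) / e n = c n * v (τ n) + d (τ n) := by
        intro n
        rw [← hab (τ n), add_div]
        congr 1
        · simp only [hc]
          rw [div_mul_eq_mul_div]
        · simp only [he, hd]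
          rw [mul_div_mul_left _ _ (hbcne n)]
      have hcv : Filter.Tendsto (fun n => c n * v (τ n)) atTop (nhds (-u₁)) := by
        have h2 : Filter.Tendsto (fun n => u (τ n) / e n - d (τ n)) atTop (nhds (0 - u₁)) :=
          hue0.sub hdρ
        rw [zero_sub] at h2
        refine h2.congr fun n => ?_
        rw [hkey n]; ring
      have hvτ : Filter.Tendsto (fun n => v (τ n)) atTop (nhds v₀) := hv.comp hτat
      have hclim : Filter.Tendsto c atTop (nhds (-u₁ / v₀)) := by
        have h3 : Filter.Tendsto (fun n => c n * v (τ n) / v (τ n)) atTop (nhds (-u₁ / v₀)) :=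
          hcv.div hvτ hv₀
        refine h3.congr fun n => ?_
        rw [mul_div_assoc, div_self (hvne (τ n)), mul_one]
      have hcim : ∀ n, (c n).im = 0 := by
        intro n
        have h4 : c n = ((a (τ n) : ℝ) / ((b (τ n) : ℝ) * ‖w (τ n)‖) : ℝ) := by
          simp only [hc, he]; push_cast; ring_nf
        rw [h4, Complex.ofReal_im]
      have him : (-u₁ / v₀).im = 0 := by
        have h1 : Filter.Tendsto (fun n => (c n).im) atTop (nhds ((-u₁ / v₀).im)) :=
          (Complex.continuous_im.tendsto _).comp hclim
        have h2 : Filter.Tendsto (fun n => (c n).im) atTop (nhds 0) := by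
          simpa [hcim] using tendsto_const_nhds (α := ℝ) (f := atTop (α := ℕ)) (x := 0)
        exact tendsto_nhds_unique h1 h2
      have hu₁span : u₁ ∈ Submodule.span ℝ ({v₀} : Set ℂ) := by
        rw [Submodule.mem_span_singleton]
        refine ⟨-(-u₁ / v₀).re, ?_⟩
        have h5 : -u₁ / v₀ = ((-u₁ / v₀).re : ℂ) := by
          rw [Complex.ext_iff]
          simp [him]
        have h3 : -u₁ = ((-u₁ / v₀).re : ℂ) * v₀ := by
          rw [← h5]; field_simp
        rw [Complex.real_smul]
        push_cast
        linear_combination h3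
      exact hdir u₁ (MapClusterPt.of_comp (u := d) (φ := τ) hτat hdρ.mapClusterPt) hu₁span
    -- now b (φ n) = 0 eventually
    obtain ⟨N, hN⟩ := Filter.eventually_atTop.mp hb0
    have hca : Filter.Tendsto (fun n => (a (φ n) : ℂ)) atTop (nhds (x / v₀)) := by
      have h1 : Filter.Tendsto (fun n => u (φ n) / v (φ n)) atTop (nhds (x / v₀)) :=
        hφx.div (hv.comp hφ.tendsto_atTop) hv₀
      refine h1.congr' ?_
      filter_upwards [Filter.eventually_atTop.mpr ⟨N, fun n hn => hN n hn⟩] with n hn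
      rw [← hab (φ n), hn]
      push_cast
      rw [zero_mul, add_zero, mul_div_assoc, div_self (hvne (φ n)), mul_one]
    obtain ⟨M, hM⟩ := Metric.cauchySeq_iff'.mp hca.cauchySeq 1 one_pos
    have hconst : ∀ n ≥ M, a (φ n) = a (φ M) := by
      intro n hn
      have h6 := hM n hn
      rw [Complex.dist_eq] at h6
      have habs : |a (φ n) - a (φ M)| < 1 := by
        have h7 : ‖((a (φ n) - a (φ M) : ℤ) : ℂ)‖ < 1 := by
          push_cast; exact h6
        rw [Complex.norm_intCast] at h7
        exact_mod_cast h7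
      have h8 : a (φ n) - a (φ M) = 0 := by rwa [Int.abs_lt_one_iff] at habs
      omega
    have hxeq : x = (a (φ M) : ℂ) * v₀ := by
      have h1 : Filter.Tendsto (fun n => (a (φ M) : ℂ) * v (φ n)) atTop
          (nhds ((a (φ M) : ℂ) * v₀)) := (hv.comp hφ.tendsto_atTop).const_mul _
      have h2 : Filter.Tendsto (fun n => u (φ n)) atTop (nhds ((a (φ M) : ℂ) * v₀)) := by
        refine h1.congr' ?_
        filter_upwards [Filter.eventually_atTop.mpr ⟨max M N, fun n hn => hn⟩] with n hn
        rw [← hab (φ n), hN n (le_trans (le_max_right _ _) hn),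
          hconst n (le_trans (le_max_left _ _) hn)]
        push_cast; ring
      exact tendsto_nhds_unique hφx h2
    exact SetLike.mem_coe.mpr (AddSubgroup.mem_zmultiples_iff.mpr
      ⟨a (φ M), by rw [zsmul_eq_mul, ← hxeq]⟩)
end

section
/- A sequence of cyclic groups generated by loxodromic elements g_n ∈ PSL(2,ℂ) whose two fixed points p_n, q_n both converge to the same point p ∈ ℂP¹, and whose multipliers λ_n → 1, can converge in the Chabauty topology to a group of parabolic elements fixing p. -/
open Matrix Complex Filter Topology
noncomputable section

/-- `SL(2,ℂ)`. -/
abbrev SL2 := Matrix.SpecialLinearGroup (Fin 2) ℂ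

instance : TopologicalSpace SL2 := instTopologicalSpaceSubtype

/-- `PSL(2,ℂ)`, as the quotient of `SL(2,ℂ)` by its center `{±I}`. -/
abbrev PSL2 := SL2 ⧸ Subgroup.center SL2

/-- The Möbius transformation of the Riemann sphere `ℂP¹ = OnePoint ℂ`
associated to a matrix in `SL(2,ℂ)`. -/
noncomputable def mob (A : SL2) (x : OnePoint ℂ) : OnePoint ℂ :=
  Option.elim x
    (if A.1 1 0 = 0 then OnePoint.infty else ((A.1 0 0 / A.1 1 0 : ℂ) : OnePoint ℂ))
    (fun z => if A.1 1 0 * z + A.1 1 1 = 0 then OnePoint.infty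
      else (((A.1 0 0 * z + A.1 0 1) / (A.1 1 0 * z + A.1 1 1) : ℂ) : OnePoint ℂ))

/-- `g ∈ PSL(2,ℂ)` fixes the point `x ∈ ℂP¹` (well defined since the center acts
trivially projectively: we require every lift to fix `x`). -/
def Fixes (g : PSL2) (x : OnePoint ℂ) : Prop :=
  ∀ A : SL2, (QuotientGroup.mk A : PSL2) = g → mob A x = x

/-- An element of `PSL(2,ℂ)` is parabolic if it is non-identity and has a unique
fixed point on the Riemann sphere. -/
def IsParabolic (g : PSL2) : Prop := g ≠ 1 ∧ ∃! x, Fixes g x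

/-- The translation `z ↦ z + b` as an element of `PSL(2,ℂ)`. -/
def Tr (b : ℂ) : PSL2 := QuotientGroup.mk ⟨!![1, b; 0, 1], by simp [Matrix.det_fin_two_of]⟩

/-- The diagonal element acting as `z ↦ e^t z`. -/
def Dg (t : ℂ) : PSL2 := QuotientGroup.mk ⟨!![Complex.exp (t/2), 0; 0, Complex.exp (-(t/2))],
  by simp [Matrix.det_fin_two_of, ← Complex.exp_add]⟩

/-- The involution `z ↦ 1/z` as an element of `PSL(2,ℂ)`. -/
def iotaP : PSL2 := QuotientGroup.mk ⟨!![0, Complex.I; Complex.I, 0],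
  by simp [Matrix.det_fin_two_of, Complex.I_mul_I]⟩

/-- The involution `z ↦ -z` as an element of `PSL(2,ℂ)`. -/
def negP : PSL2 := QuotientGroup.mk ⟨!![Complex.I, 0; 0, -Complex.I],
  by simp [Matrix.det_fin_two_of, Complex.I_mul_I]⟩

/-- The full diagonal group `{z ↦ a z : a ∈ ℂ*}` of `PSL(2,ℂ)` (as a set, the range of `Dg`
since `exp : ℂ → ℂ*` is onto). -/
def Dset : Set PSL2 := Set.range Dg

/-- The full translation group `{z ↦ z + b : b ∈ ℂ}` of `PSL(2,ℂ)` (as a set). -/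
def Tset : Set PSL2 := Set.range Tr

/-! ### Auxiliary development for `stmt13` -/

instance : Fact (Even (Fintype.card (Fin 2))) := ⟨⟨1, rfl⟩⟩

instance : IsTopologicalGroup SL2 where
  continuous_mul := by
    apply continuous_induced_rng.2
    exact (continuous_subtype_val.comp continuous_fst).matrix_mul
      (continuous_subtype_val.comp continuous_snd)
  continuous_inv := by
    apply continuous_induced_rng.2
    exact continuous_subtype_val.matrix_adjugate.congr fun x =>
      (Matrix.SpecialLinearGroup.coe_inv x).symm

instance : T2Space SL2 :=
  IsEmbedding.t2Space ⟨⟨rfl⟩, Subtype.coe_injective⟩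

instance : IsClosed ((Subgroup.center SL2 : Subgroup SL2) : Set SL2) := by
  have h : ((Subgroup.center SL2 : Subgroup SL2) : Set SL2)
      = ⋂ g : SL2, {x : SL2 | g * x = x * g} := by
    ext x
    simp only [SetLike.mem_coe, Subgroup.mem_center_iff, Set.mem_iInter, Set.mem_setOf_eq]
  rw [h]
  exact isClosed_iInter fun g =>
    isClosed_eq (continuous_const.mul continuous_id) (continuous_id.mul continuous_const)

lemma center_elts {Z : SL2} (h : Z ∈ Subgroup.center SL2) : Z = 1 ∨ Z = -1 := by
  obtain ⟨r, hr, hA⟩ := Matrix.SpecialLinearGroup.mem_center_iff.mp h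
  have hr2 : r * r = 1 := by
    have : r ^ (2 : ℕ) = 1 := by simpa [Fintype.card_fin] using hr
    simpa [sq] using this
  rcases mul_self_eq_one_iff.mp hr2 with h1 | h1
  · left
    apply Subtype.ext
    have := hA
    rw [h1] at this
    simpa [Matrix.scalar_apply] using this.symm
  · right
    apply Subtype.ext
    have := hA
    rw [h1] at this
    rw [Matrix.SpecialLinearGroup.coe_neg, Matrix.SpecialLinearGroup.coe_one]
    rw [← this]
    simp [Matrix.scalar_apply, Matrix.smul_one_eq_diagonal]
    ext i j
    by_cases hij : i = j <;> simp [Matrix.diagonal, hij, Matrix.one_apply]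

/-- the matrix of a translation -/
def Pm (b : ℂ) : SL2 := ⟨!![1, b; 0, 1], by simp [Matrix.det_fin_two_of]⟩

/-- the matrix of a diagonal element -/
def Dm (t : ℂ) : SL2 := ⟨!![Complex.exp (t/2), 0; 0, Complex.exp (-(t/2))],
  by simp [Matrix.det_fin_two_of, ← Complex.exp_add]⟩

lemma Tr_eq (b : ℂ) : Tr b = QuotientGroup.mk (Pm b) := rfl

lemma Dg_eq (t : ℂ) : Dg t = QuotientGroup.mk (Dm t) := rfl

lemma Pm_mul (a b : ℂ) : Pm a * Pm b = Pm (a + b) := by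
  apply Subtype.ext
  show (Pm a).1 * (Pm b).1 = _
  simp [Pm, Matrix.mul_fin_two, add_comm]

lemma Pm_zero : Pm 0 = 1 := by
  apply Subtype.ext
  simp only [Pm, Matrix.SpecialLinearGroup.coe_one]
  ext i j
  fin_cases i <;> fin_cases j <;> simp [Matrix.one_apply]

lemma Pm_inv (a : ℂ) : (Pm a)⁻¹ = Pm (-a) := by
  apply inv_eq_of_mul_eq_one_right
  rw [Pm_mul]; simpa using Pm_zero

lemma Dm_mul (a b : ℂ) : Dm a * Dm b = Dm (a + b) := by
  apply Subtype.ext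
  show (Dm a).1 * (Dm b).1 = _
  simp only [Dm, Matrix.mul_fin_two, ← Complex.exp_add]
  ring_nf

lemma Dm_zero : Dm 0 = 1 := by
  apply Subtype.ext
  simp only [Dm, Matrix.SpecialLinearGroup.coe_one]
  norm_num
  ext i j
  fin_cases i <;> fin_cases j <;> simp [Matrix.one_apply]

lemma Dm_inv (a : ℂ) : (Dm a)⁻¹ = Dm (-a) := by
  apply inv_eq_of_mul_eq_one_right
  rw [Dm_mul]; simpa using Dm_zero

lemma Dm_zpow (t : ℂ) (k : ℤ) : Dm t ^ k = Dm (k * t) := by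
  induction k using Int.induction_on with
  | zero => simpa using Dm_zero.symm
  | succ k ih =>
    rw [_root_.zpow_add_one, ih, Dm_mul]
    norm_num
    ring_nf
  | pred k ih =>
    rw [_root_.zpow_sub_one, ih, Dm_inv, Dm_mul]
    norm_num
    ring_nf

/-- the matrix of a loxodromic element with fixed points `q` and `∞` -/
def Cm (t q : ℂ) : SL2 := Pm q * Dm t * Pm (-q)

lemma Cm_zpow (t q : ℂ) (k : ℤ) : Cm t q ^ k = Cm (k * t) q := by
  have h : ∀ s : ℂ, Cm s q = Pm q * Dm s * (Pm q)⁻¹ := fun s => by rw [Cm, Pm_inv]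
  rw [h, conj_zpow, Dm_zpow, ← h]

lemma Cm_val (t q : ℂ) : (Cm t q).1 =
    !![Complex.exp (t/2), q * (Complex.exp (-(t/2)) - Complex.exp (t/2));
       0, Complex.exp (-(t/2))] := by
  show ((Pm q).1 * (Dm t).1) * (Pm (-q)).1 = _
  simp only [Pm, Dm, Matrix.mul_fin_two]
  ring_nf

lemma mob_neg (A : SL2) (x : OnePoint ℂ) : mob (-A) x = mob A x := by
  have hv : ∀ i j, (-A).1 i j = -(A.1 i j) := fun i j => by
    rw [Matrix.SpecialLinearGroup.coe_neg]; simp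
  cases x with
  | infty =>
    show (if (-A).1 1 0 = 0 then _ else _) = (if A.1 1 0 = 0 then _ else _)
    rw [hv]
    by_cases h : A.1 1 0 = 0 <;> simp [h, hv, neg_div_neg_eq]
  | coe z =>
    have he1 : (-A).1 1 0 * z + (-A).1 1 1 = -(A.1 1 0 * z + A.1 1 1) := by
      rw [hv, hv]; ring
    have he2 : (-A).1 0 0 * z + (-A).1 0 1 = -(A.1 0 0 * z + A.1 0 1) := by
      rw [hv, hv]; ring
    have hm : ∀ B : SL2, mob B (z : OnePoint ℂ) =
        (if B.1 1 0 * z + B.1 1 1 = 0 then OnePoint.infty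
          else (((B.1 0 0 * z + B.1 0 1) / (B.1 1 0 * z + B.1 1 1) : ℂ) : OnePoint ℂ)) :=
      fun B => rfl
    rw [hm, hm, he1, he2]
    simp only [neg_eq_zero, neg_div_neg_eq]

lemma fixes_mk_iff (A : SL2) (x : OnePoint ℂ) :
    Fixes (QuotientGroup.mk A) x ↔ mob A x = x := by
  constructor
  · intro h; exact h A rfl
  · intro h B hB
    have hmem : B⁻¹ * A ∈ Subgroup.center SL2 := QuotientGroup.eq.mp hB
    rcases center_elts hmem with h1 | h1
    · have : A = B := by
        have := congrArg (fun y => B * y) h1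
        simpa [← mul_assoc] using this
      rw [← this]; exact h
    · have hBA : B = -A := by
        have := congrArg (fun y => B * y) h1
        simp only [← mul_assoc, mul_inv_cancel, one_mul, mul_one] at this
        rw [this]; simp [mul_neg]
      rw [hBA, mob_neg]; exact h

/-- the sequence of loxodromic elements -/
def gseq (n : ℕ) : PSL2 :=
  Tr ((n : ℂ) + 1) * Dg (-(((n : ℂ) + 1)⁻¹)) * (Tr ((n : ℂ) + 1))⁻¹

lemma gseq_eq (n : ℕ) :
    gseq n = QuotientGroup.mk (Cm (-(((n : ℂ) + 1)⁻¹)) ((n : ℂ) + 1)) := by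
  rw [gseq, Tr_eq, Dg_eq, ← QuotientGroup.mk_inv, Pm_inv, ← QuotientGroup.mk_mul,
    ← QuotientGroup.mk_mul, Cm]

lemma gseq_zpow (n : ℕ) (k : ℤ) :
    gseq n ^ k = QuotientGroup.mk (Cm ((k : ℂ) * (-(((n : ℂ) + 1)⁻¹))) ((n : ℂ) + 1)) := by
  rw [gseq_eq, ← QuotientGroup.mk_zpow, Cm_zpow]

/-- a continuous "size" function on `PSL2` -/
def Theta (x : PSL2) : ℝ :=
  Quotient.liftOn' x
    (fun A : SL2 => ‖A.1 0 0‖ + ‖A.1 0 1‖ + ‖A.1 1 0‖ + ‖A.1 1 1‖)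
    (by
      intro a b hab
      have hmem : a⁻¹ * b ∈ Subgroup.center SL2 := QuotientGroup.leftRel_apply.mp hab
      rcases center_elts hmem with h1 | h1
      · have : b = a := by
          have := congrArg (fun y => a * y) h1
          simpa [← mul_assoc] using this
        rw [this]
      · have : b = -a := by
          have := congrArg (fun y => a * y) h1
          simp only [← mul_assoc, mul_inv_cancel, one_mul, mul_one] at this
          rw [this]; simp [mul_neg]
        rw [this]
        have hv : ∀ i j, (-a).1 i j = -(a.1 i j) := fun i j => by
          rw [Matrix.SpecialLinearGroup.coe_neg]; simp
        simp [hv])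

lemma Theta_mk (A : SL2) :
    Theta (QuotientGroup.mk A) = ‖A.1 0 0‖ + ‖A.1 0 1‖ + ‖A.1 1 0‖ + ‖A.1 1 1‖ := rfl

lemma Theta_continuous : Continuous Theta := by
  apply Continuous.quotient_liftOn'
  have h : ∀ i j : Fin 2, Continuous fun A : SL2 => ‖A.1 i j‖ := fun i j =>
    ((continuous_apply j).comp ((continuous_apply i).comp (continuous_subtype_val : Continuous (Subtype.val : SL2 → Matrix (Fin 2) (Fin 2) ℂ)))).norm
  exact (((h 0 0).add (h 0 1)).add (h 1 0)).add (h 1 1)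

lemma Theta_nonneg (x : PSL2) : 0 ≤ Theta x := by
  induction x using QuotientGroup.induction_on with
  | H A => rw [Theta_mk]; positivity

lemma key_real (m a : ℝ) (hm : 1 ≤ m) :
    2 * m * |a| ≤ (Real.exp (-a) + m * |Real.exp a - Real.exp (-a)| + 0 + Real.exp a) ^ 2 := by
  have hsymm : ∀ a : ℝ, 0 ≤ a →
      2 * m * |a| ≤ (Real.exp (-a) + m * |Real.exp a - Real.exp (-a)| + 0 + Real.exp a) ^ 2 := by
    intro a ha
    set E := Real.exp a with hE
    set F := Real.exp (-a) with hF
    have hEF : E * F = 1 := by rw [hE, hF, ← Real.exp_add]; simp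
    have hE1 : 1 ≤ E := Real.one_le_exp ha
    have hF0 : 0 < F := Real.exp_pos _
    have hFE : F ≤ E := by nlinarith
    have habs : |E - F| = E - F := abs_of_nonneg (by linarith)
    have h2r : 2 * a + 1 ≤ E ^ 2 := by
      have h := Real.add_one_le_exp (2 * a)
      calc 2 * a + 1 ≤ Real.exp (2 * a) := h
        _ = E ^ 2 := by rw [hE, two_mul, Real.exp_add]; ring
    rw [_root_.abs_of_nonneg ha, habs]
    nlinarith [sq_nonneg (E - m * (E - F)), hF0.le, sub_nonneg.2 hFE, sub_nonneg.2 hm,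
      mul_nonneg (mul_nonneg (by linarith : (0:ℝ) ≤ m) (sub_nonneg.2 hFE)) hF0.le,
      mul_nonneg hF0.le (by nlinarith : (0:ℝ) ≤ m * (E - F) + E)]
  rcases le_or_gt 0 a with ha | ha
  · exact hsymm a ha
  · have := hsymm (-a) (by linarith)
    have h1 : |(-a)| = |a| := abs_neg a
    have h2 : |Real.exp (-a) - Real.exp (-(-a))| = |Real.exp a - Real.exp (-a)| := by
      rw [neg_neg, abs_sub_comm]
    rw [h1, h2, neg_neg] at this
    linarith [this]


lemma norm_exp_real (r : ℝ) : ‖Complex.exp ((r : ℝ) : ℂ)‖ = Real.exp r := by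
  rw [Complex.norm_exp, Complex.ofReal_re]

lemma Theta_g_bound (n : ℕ) (k : ℤ) : (|k| : ℝ) ≤ Theta (gseq n ^ k) ^ 2 := by
  set m : ℝ := (n : ℝ) + 1 with hmdef
  have hm1 : (1 : ℝ) ≤ m := by simp [hmdef]
  have hm0 : m ≠ 0 := by positivity
  set a : ℝ := (k : ℝ) / (2 * m) with hadef
  have hcast : ((n : ℂ) + 1) = ((m : ℝ) : ℂ) := by push_cast [hmdef]; ring
  have hc1 : ((k : ℂ) * (-(((n : ℂ) + 1)⁻¹))) / 2 = ((-a : ℝ) : ℂ) := by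
    rw [hcast, hadef]; push_cast; field_simp
  rw [gseq_zpow, Theta_mk, Cm_val]
  simp only [Matrix.cons_val_zero, Matrix.cons_val_one, Matrix.head_cons, Matrix.cons_val',
    Matrix.empty_val', Matrix.cons_val_fin_one, Matrix.head_fin_const, Matrix.of_apply]
  have hT1 : Complex.exp ((k : ℂ) * -(((n : ℂ) + 1)⁻¹) / 2) = ((Real.exp (-a) : ℝ) : ℂ) := by
    rw [show (k : ℂ) * -(((n : ℂ) + 1)⁻¹) / 2 = ((-a : ℝ) : ℂ) from hc1]
    exact (Complex.ofReal_exp (-a)).symm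
  have hT2 : Complex.exp (-((k : ℂ) * -(((n : ℂ) + 1)⁻¹) / 2)) = ((Real.exp a : ℝ) : ℂ) := by
    rw [show (k : ℂ) * -(((n : ℂ) + 1)⁻¹) / 2 = ((-a : ℝ) : ℂ) from hc1]
    rw [show -(((-a : ℝ)) : ℂ) = ((a : ℝ) : ℂ) by push_cast; ring]
    exact (Complex.ofReal_exp a).symm
  rw [hT1, hT2, hcast]
  rw [show ((m : ℝ) : ℂ) * (((Real.exp a : ℝ) : ℂ) - ((Real.exp (-a) : ℝ) : ℂ))
      = (((m * (Real.exp a - Real.exp (-a)) : ℝ)) : ℂ) by push_cast; ring]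
  have hnr : ∀ r : ℝ, ‖((r : ℝ) : ℂ)‖ = |r| := fun r => by
    rw [Complex.norm_real, Real.norm_eq_abs]
  rw [hnr, hnr, hnr, norm_zero]
  rw [_root_.abs_of_nonneg (Real.exp_pos (-a)).le, _root_.abs_of_nonneg (Real.exp_pos a).le,
    abs_mul, _root_.abs_of_nonneg (by linarith : (0 : ℝ) ≤ m)]
  have hkval : 2 * m * |a| = (|k| : ℝ) := by
    rw [hadef, abs_div, _root_.abs_of_nonneg (by linarith : (0 : ℝ) ≤ 2 * m)]
    field_simp
  rw [← hkval]
  simpa using key_real m a hm1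

lemma wlim : Filter.Tendsto (fun n : ℕ => (((n : ℂ)) + 1)⁻¹) atTop (nhds 0) := by
  have h : Filter.Tendsto (fun n : ℕ => (1 : ℝ) / ((n : ℝ) + 1)) atTop (nhds 0) :=
    tendsto_one_div_add_atTop_nhds_zero_nat
  have h2 := (Complex.continuous_ofReal.tendsto 0).comp h
  apply h2.congr
  intro n
  show ((1 / ((n : ℝ) + 1) : ℝ) : ℂ) = ((n : ℂ) + 1)⁻¹
  push_cast
  ring

lemma mk_continuous : Continuous (QuotientGroup.mk : SL2 → PSL2) := continuous_quotient_mk'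

lemma gtends (k : ℤ) :
    Filter.Tendsto (fun n => gseq n ^ k) atTop (nhds (Tr (k : ℂ))) := by
  simp only [gseq_zpow, Tr_eq]
  apply (mk_continuous.tendsto _).comp
  refine ((show IsEmbedding (Subtype.val : SL2 → Matrix (Fin 2) (Fin 2) ℂ) from ⟨⟨rfl⟩, Subtype.coe_injective⟩).tendsto_nhds_iff).2 ?_
  have hval : ∀ n : ℕ, ((Subtype.val : SL2 → Matrix (Fin 2) (Fin 2) ℂ) ∘
      fun n : ℕ => Cm ((k : ℂ) * (-(((n : ℂ) + 1)⁻¹))) ((n : ℂ) + 1)) n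
      = !![Complex.exp ((((k : ℂ) * (-(((n : ℂ) + 1)⁻¹)))) / 2),
      ((n : ℂ) + 1) * (Complex.exp (-((((k : ℂ) * (-(((n : ℂ) + 1)⁻¹)))) / 2))
        - Complex.exp ((((k : ℂ) * (-(((n : ℂ) + 1)⁻¹)))) / 2));
      0, Complex.exp (-((((k : ℂ) * (-(((n : ℂ) + 1)⁻¹)))) / 2))] := fun n => Cm_val _ _
  rw [tendsto_congr hval]
  have hPmval : (Pm (k : ℂ)).val = !![1, (k : ℂ); 0, 1] := rfl
  rw [hPmval]
  refine tendsto_pi_nhds.2 ?_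
  intro i
  refine tendsto_pi_nhds.2 ?_
  intro j
  have harg : Filter.Tendsto (fun n : ℕ => ((k : ℂ) * (-(((n : ℂ) + 1)⁻¹))) / 2) atTop
      (nhds 0) := by
    have h := (wlim.const_mul (-(k : ℂ) / 2))
    rw [mul_zero] at h
    apply h.congr
    intro n; ring
  have hexp1 : Filter.Tendsto
      (fun n : ℕ => Complex.exp (((k : ℂ) * (-(((n : ℂ) + 1)⁻¹))) / 2)) atTop (nhds 1) := by
    have := (Complex.continuous_exp.tendsto 0).comp harg
    simpa [Function.comp_def] using this
  have hexp2 : Filter.Tendsto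
      (fun n : ℕ => Complex.exp (-(((k : ℂ) * (-(((n : ℂ) + 1)⁻¹))) / 2))) atTop (nhds 1) := by
    have hneg := harg.neg
    rw [neg_zero] at hneg
    have := (Complex.continuous_exp.tendsto 0).comp hneg
    simpa [Function.comp_def] using this
  have hmid : Filter.Tendsto
      (fun n : ℕ => ((n : ℂ) + 1) * (Complex.exp (-(((k : ℂ) * (-(((n : ℂ) + 1)⁻¹))) / 2))
        - Complex.exp (((k : ℂ) * (-(((n : ℂ) + 1)⁻¹))) / 2))) atTop (nhds (k : ℂ)) := by
    set f : ℂ → ℂ := fun z => Complex.exp (((k : ℂ) / 2) * z)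
      - Complex.exp (-(((k : ℂ) / 2) * z)) with hf
    have hlin : HasDerivAt (fun z : ℂ => ((k : ℂ) / 2) * z) ((k : ℂ) / 2) 0 := by
      simpa using (hasDerivAt_id (0 : ℂ)).const_mul ((k : ℂ) / 2)
    have hlin2 : HasDerivAt (fun z : ℂ => -(((k : ℂ) / 2) * z)) (-((k : ℂ) / 2)) 0 := hlin.neg
    have hd1 : HasDerivAt (fun z : ℂ => Complex.exp (((k : ℂ) / 2) * z)) ((k : ℂ) / 2) 0 := by
      have := (Complex.hasDerivAt_exp (((k : ℂ) / 2) * 0)).comp 0 hlin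
      simpa [Function.comp_def] using this
    have hd2 : HasDerivAt (fun z : ℂ => Complex.exp (-(((k : ℂ) / 2) * z))) (-((k : ℂ) / 2))
        0 := by
      have := (Complex.hasDerivAt_exp (-(((k : ℂ) / 2) * 0))).comp 0 hlin2
      simpa [Function.comp_def] using this
    have hd : HasDerivAt f (k : ℂ) 0 := by
      have := hd1.sub hd2
      rw [show (k : ℂ) / 2 - -((k : ℂ) / 2) = (k : ℂ) by ring] at this
      exact this
    have hs := hasDerivAt_iff_tendsto_slope.mp hd
    have hw : Filter.Tendsto (fun n : ℕ => (((n : ℂ)) + 1)⁻¹) atTop (nhdsWithin 0 {0}ᶜ) := by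
      rw [tendsto_nhdsWithin_iff]
      refine ⟨wlim, Filter.Eventually.of_forall fun n => ?_⟩
      have hne : ((n : ℂ) + 1) ≠ 0 := by
        rw [show ((n : ℂ) + 1) = ((n + 1 : ℕ) : ℂ) by push_cast; ring]
        exact Nat.cast_ne_zero.mpr (Nat.succ_ne_zero n)
      simpa using inv_ne_zero hne
    have hcomp := hs.comp hw
    apply hcomp.congr
    intro n
    have hne : ((n : ℂ) + 1) ≠ 0 := by
      rw [show ((n : ℂ) + 1) = ((n + 1 : ℕ) : ℂ) by push_cast; ring]
      exact Nat.cast_ne_zero.mpr (Nat.succ_ne_zero n)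
    have hne2 : (((n : ℂ)) + 1)⁻¹ ≠ 0 := inv_ne_zero hne
    simp only [Function.comp_apply]
    rw [slope_def_field]
    have h0 : f 0 = 0 := by simp [hf]
    rw [h0, sub_zero, sub_zero, div_eq_iff hne2, hf]
    show Complex.exp ((k : ℂ) / 2 * (((n : ℂ) + 1)⁻¹))
      - Complex.exp (-((k : ℂ) / 2 * (((n : ℂ) + 1)⁻¹))) = _
    have harg1 : ((k : ℂ) / 2) * ((n : ℂ) + 1)⁻¹ = -(((k : ℂ) * (-(((n : ℂ) + 1)⁻¹))) / 2) := by
      ring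
    have harg2 : -(((k : ℂ) / 2) * ((n : ℂ) + 1)⁻¹) = ((k : ℂ) * (-(((n : ℂ) + 1)⁻¹))) / 2 := by
      ring
    rw [harg2, harg1]
    field_simp
  fin_cases i <;> fin_cases j <;>
    simp only [Matrix.cons_val_zero, Matrix.cons_val_one, Matrix.head_cons,
      Matrix.head_fin_const, Matrix.cons_val', Matrix.empty_val', Matrix.cons_val_fin_one,
      Fin.zero_eta, Fin.mk_one]
  · exact hexp1
  · exact hmid
  · exact tendsto_const_nhds
  · exact hexp2


lemma mob_coe (B : SL2) (z : ℂ) : mob B (z : OnePoint ℂ) =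
    (if B.1 1 0 * z + B.1 1 1 = 0 then OnePoint.infty
      else (((B.1 0 0 * z + B.1 0 1) / (B.1 1 0 * z + B.1 1 1) : ℂ) : OnePoint ℂ)) := rfl

lemma mob_infty (B : SL2) : mob B OnePoint.infty =
    (if B.1 1 0 = 0 then OnePoint.infty else ((B.1 0 0 / B.1 1 0 : ℂ) : OnePoint ℂ)) := rfl

lemma mob_Cm_infty (t q : ℂ) : mob (Cm t q) OnePoint.infty = OnePoint.infty := by
  rw [mob_infty, Cm_val]
  simp

lemma mob_Cm_fixed (t q : ℂ) : mob (Cm t q) (q : OnePoint ℂ) = (q : OnePoint ℂ) := by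
  rw [mob_coe, Cm_val]
  have hne : Complex.exp (-(t/2)) ≠ 0 := Complex.exp_ne_zero _
  simp only [Matrix.cons_val_zero, Matrix.cons_val_one, Matrix.head_cons, Matrix.cons_val',
    Matrix.empty_val', Matrix.cons_val_fin_one, Matrix.head_fin_const, Matrix.of_apply]
  rw [zero_mul, zero_add, if_neg hne]
  congr 1
  field_simp
  ring

lemma mob_Pm_coe (b z : ℂ) : mob (Pm b) (z : OnePoint ℂ) = ((z + b : ℂ) : OnePoint ℂ) := by
  rw [mob_coe]
  simp [Pm]

lemma mob_Pm_infty (b : ℂ) : mob (Pm b) OnePoint.infty = OnePoint.infty := by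
  rw [mob_infty]
  simp [Pm]

lemma fixes_Tr_infty (b : ℂ) : Fixes (Tr b) OnePoint.infty := by
  rw [Tr_eq, fixes_mk_iff]
  exact mob_Pm_infty b

lemma Pm_zpow (b : ℂ) (k : ℤ) : Pm b ^ k = Pm ((k : ℂ) * b) := by
  induction k using Int.induction_on with
  | zero => simpa using Pm_zero.symm
  | succ k ih =>
    rw [_root_.zpow_add_one, ih, Pm_mul]
    norm_num
    ring_nf
  | pred k ih =>
    rw [_root_.zpow_sub_one, ih, Pm_inv, Pm_mul]
    norm_num
    ring_nf

lemma Tr_zpow (k : ℤ) : (Tr 1) ^ k = Tr (k : ℂ) := by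
  rw [Tr_eq, Tr_eq, ← QuotientGroup.mk_zpow, Pm_zpow, mul_one]

lemma Tr_eq_one_iff (b : ℂ) : Tr b = 1 ↔ b = 0 := by
  constructor
  · intro h
    have h1 : (QuotientGroup.mk (Pm b) : PSL2) = 1 := h
    have h2 : Pm b ∈ Subgroup.center SL2 := (QuotientGroup.eq_one_iff _).mp h1
    rcases center_elts h2 with h3 | h3
    · have := congrArg (fun A : SL2 => A.1 0 1) h3
      simpa [Pm, Matrix.one_apply] using this
    · have := congrArg (fun A : SL2 => A.1 0 0) h3
      simp only [Pm, Matrix.SpecialLinearGroup.coe_neg, Matrix.SpecialLinearGroup.coe_one] at this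
      norm_num [Matrix.one_apply] at this
  · intro h
    rw [h, Tr_eq]
    rw [Pm_zero]
    rfl

lemma parab_Tr {b : ℂ} (hb : b ≠ 0) : IsParabolic (Tr b) := by
  constructor
  · intro h; exact hb ((Tr_eq_one_iff b).mp h)
  · refine ⟨OnePoint.infty, fixes_Tr_infty b, ?_⟩
    intro y hy
    cases y with
    | infty => rfl
    | coe z =>
      exfalso
      have := hy (Pm b) rfl
      rw [mob_Pm_coe] at this
      have hz : z + b = z := by exact_mod_cast this
      exact hb (by simpa using congrArg (fun w => w - z) hz)

lemma qf_tendsto :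
    Filter.Tendsto (fun n : ℕ => ((((n : ℂ) + 1) : ℂ) : OnePoint ℂ)) atTop
      (nhds (OnePoint.infty : OnePoint ℂ)) := by
  have h1 : Filter.Tendsto (fun n : ℕ => ((n : ℂ) + 1)) atTop (Filter.cocompact ℂ) := by
    rw [← Metric.cobounded_eq_cocompact]
    rw [← tendsto_norm_atTop_iff_cobounded]
    have h2 : Filter.Tendsto (fun n : ℕ => ((n : ℝ) + 1)) atTop atTop :=
      tendsto_atTop_add_const_right _ 1 tendsto_natCast_atTop_atTop
    apply h2.congr'
    filter_upwards with n
    rw [show ((n : ℂ) + 1) = (((n : ℝ) + 1 : ℝ) : ℂ) by push_cast; ring]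
    rw [Complex.norm_real, Real.norm_eq_abs, _root_.abs_of_nonneg (by positivity)]
  have h3 : Filter.Tendsto (fun n : ℕ => ((n : ℂ) + 1)) atTop (Filter.coclosedCompact ℂ) := by
    rwa [Filter.coclosedCompact_eq_cocompact]
  exact OnePoint.tendsto_coe_infty.comp h3

lemma fixes_g_infty (n : ℕ) : Fixes (gseq n) OnePoint.infty := by
  rw [gseq_eq, fixes_mk_iff]
  exact mob_Cm_infty _ _

lemma fixes_g_q (n : ℕ) : Fixes (gseq n) ((((n : ℂ) + 1) : ℂ) : OnePoint ℂ) := by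
  rw [gseq_eq, fixes_mk_iff]
  exact mob_Cm_fixed _ _

lemma lam_tendsto :
    Filter.Tendsto (fun n : ℕ => Complex.exp (-((((n : ℂ)) + 1)⁻¹))) atTop (nhds 1) := by
  have hneg := wlim.neg
  rw [neg_zero] at hneg
  have := (Complex.continuous_exp.tendsto 0).comp hneg
  simpa [Function.comp_def] using this

lemma lam_norm (n : ℕ) : ‖Complex.exp (-((((n : ℂ)) + 1)⁻¹))‖ ≠ 1 := by
  have hc : -((((n : ℂ)) + 1)⁻¹) = ((-(((n : ℝ) + 1)⁻¹) : ℝ) : ℂ) := by push_cast; ring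
  rw [hc, norm_exp_real]
  have : Real.exp (-(((n : ℝ) + 1)⁻¹)) < 1 := by
    rw [Real.exp_lt_one_iff]
    have : (0 : ℝ) < ((n : ℝ) + 1)⁻¹ := by positivity
    linarith
  exact ne_of_lt this

/-- A sequence of cyclic groups generated by loxodromic elements `g n ∈ PSL(2,ℂ)` whose two
fixed points both converge to the same point `p ∈ ℂP¹`, and whose multipliers `λ n → 1`,
can converge in the Chabauty topology to a nontrivial group of parabolic elements
fixing `p`. -/
theorem stmt13 : ∃ (g : ℕ → PSL2) (p : OnePoint ℂ) (pf qf : ℕ → OnePoint ℂ)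
    (lam : ℕ → ℂ) (L : Subgroup PSL2),
    (∀ n, ∃ (h : PSL2) (τ : ℂ), Complex.exp τ = lam n ∧ ‖lam n‖ ≠ 1 ∧
      g n = h * Dg τ * h⁻¹) ∧
    (∀ n, pf n ≠ qf n ∧ Fixes (g n) (pf n) ∧ Fixes (g n) (qf n)) ∧
    Filter.Tendsto pf Filter.atTop (nhds p) ∧
    Filter.Tendsto qf Filter.atTop (nhds p) ∧
    Filter.Tendsto lam Filter.atTop (nhds (1 : ℂ)) ∧
    ChabConvSeq (fun n => closure ((Subgroup.zpowers (g n) : Subgroup PSL2) : Set PSL2))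
      (L : Set PSL2) ∧
    L ≠ ⊥ ∧
    (∀ h ∈ L, h = 1 ∨ (IsParabolic h ∧ Fixes h p)) := by
  refine ⟨gseq, OnePoint.infty, fun _ => OnePoint.infty,
    fun n => ((((n : ℂ) + 1) : ℂ) : OnePoint ℂ),
    fun n => Complex.exp (-((((n : ℂ)) + 1)⁻¹)),
    Subgroup.zpowers (Tr 1), ?_, ?_, ?_, ?_, ?_, ?_, ?_, ?_⟩
  · intro n
    exact ⟨Tr ((n : ℂ) + 1), -((((n : ℂ)) + 1)⁻¹), rfl, lam_norm n, rfl⟩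
  · intro n
    exact ⟨(OnePoint.infty_ne_coe _), fixes_g_infty n, fixes_g_q n⟩
  · exact tendsto_const_nhds
  · exact qf_tendsto
  · exact lam_tendsto
  · constructor
    · -- every element of L is a limit
      intro h hh
      obtain ⟨k, hk⟩ := Subgroup.mem_zpowers_iff.mp hh
      refine ⟨fun n => gseq n ^ k, fun n => subset_closure (Subgroup.zpow_mem_zpowers _ _), ?_⟩
      rw [← hk, Tr_zpow]
      exact gtends k
    · -- cluster points lie in L
      intro u hu x hx
      by_contra hxL
      set C : ℝ := Theta x + 1 with hC
      have hC0 : 0 < C := by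
        have := Theta_nonneg x
        rw [hC]; linarith
      set W : Set PSL2 := Theta ⁻¹' (Set.Iio C) with hW
      have hWopen : IsOpen W := isOpen_Iio.preimage Theta_continuous
      have hxW : x ∈ W := by
        simp only [hW, Set.mem_preimage, Set.mem_Iio, hC]
        linarith
      set K : ℤ := ⌈C ^ 2⌉ with hKdef
      have hK0 : 0 ≤ K := Int.ceil_nonneg (sq_nonneg C)
      have hsep : ∀ k : ℤ, ∃ O : Set PSL2, IsOpen O ∧ x ∈ O ∧
          ∀ᶠ n in atTop, gseq n ^ k ∉ O := by
        intro k
        have hxk : x ≠ Tr (k : ℂ) := by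
          intro he
          apply hxL
          rw [he, ← Tr_zpow]
          exact Subgroup.zpow_mem_zpowers _ _
        obtain ⟨O, P, hO, hP, hxO, hkP, hd⟩ := t2_separation hxk
        refine ⟨O, hO, hxO, ((gtends k).eventually (hP.mem_nhds hkP)).mono ?_⟩
        intro n hn hmem
        exact (Set.disjoint_left.mp hd hmem) hn
      choose Ofun hOopen hxOfun hOev using hsep
      set O : Set PSL2 := W ∩ ⋂ k ∈ Finset.Icc (-K) K, Ofun k with hOdef
      have hOopen' : IsOpen O :=
        hWopen.inter (isOpen_biInter_finset fun k _ => hOopen k)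
      have hxO : x ∈ O := ⟨hxW, Set.mem_biInter fun k _ => hxOfun k⟩
      have hev2 : ∀ᶠ n in atTop, u n ∉ O := by
        have hev : ∀ᶠ n in atTop, ∀ k ∈ Finset.Icc (-K) K, gseq n ^ k ∉ Ofun k :=
          (eventually_all_finset _).2 fun k _ => hOev k
        refine hev.mono ?_
        intro n hn
        have hS : ((Subgroup.zpowers (gseq n) : Subgroup PSL2) : Set PSL2) ⊆ Oᶜ := by
          intro y hy
          obtain ⟨k, hk⟩ := Subgroup.mem_zpowers_iff.mp hy
          rw [← hk]
          intro hyO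
          by_cases hkK : k ∈ Finset.Icc (-K) K
          · exact hn k hkK ((Set.biInter_subset_of_mem hkK) hyO.2)
          · have hKk : K < |k| := by
              rw [Finset.mem_Icc] at hkK
              push_neg at hkK
              rcases le_or_gt (-K) k with h1 | h1
              · have h2 := hkK h1
                calc K < k := h2
                  _ ≤ |k| := le_abs_self k
              · calc K ≤ -(-K) := by omega
                  _ < -k := by omega
                  _ ≤ |k| := neg_le_abs k
            have hth : C < Theta (gseq n ^ k) := by
              have h1 : C ^ 2 < ((|k| : ℤ) : ℝ) := by
                calc C ^ 2 ≤ ((K : ℤ) : ℝ) := Int.le_ceil _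
                  _ < ((|k| : ℤ) : ℝ) := by exact_mod_cast hKk
              have h2 : (|(k : ℝ)|) ≤ Theta (gseq n ^ k) ^ 2 := Theta_g_bound n k
              have h3 : ((|k| : ℤ) : ℝ) = |(k : ℝ)| := by push_cast; ring
              exact lt_of_pow_lt_pow_left₀ 2 (Theta_nonneg _) (by rw [h3] at h1; linarith)
            have hlt : Theta (gseq n ^ k) < C := hyO.1
            linarith
        have hclos : closure ((Subgroup.zpowers (gseq n) : Subgroup PSL2) : Set PSL2) ⊆ Oᶜ :=
          closure_minimal hS hOopen'.isClosed_compl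
        exact hclos (hu n)
      have hfreq : ∃ᶠ n in atTop, u n ∈ O :=
        (mapClusterPt_iff_frequently.mp hx) O (hOopen'.mem_nhds hxO)
      obtain ⟨n, h1, h2⟩ := (hfreq.and_eventually hev2).exists
      exact h2 h1
  · -- L ≠ ⊥
    intro hbot
    have h1 : Tr 1 ∈ Subgroup.zpowers (Tr 1) := Subgroup.mem_zpowers _
    rw [hbot, Subgroup.mem_bot] at h1
    have := (Tr_eq_one_iff 1).mp h1
    norm_num at this
  · -- elements are parabolic fixing ∞
    intro h hh
    obtain ⟨k, hk⟩ := Subgroup.mem_zpowers_iff.mp hh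
    by_cases hk0 : k = 0
    · left
      rw [← hk, hk0, zpow_zero]
    · right
      rw [← hk, Tr_zpow]
      have hne : ((k : ℂ)) ≠ 0 := Int.cast_ne_zero.mpr hk0
      exact ⟨parab_Tr hne, fixes_Tr_infty _⟩
end
end

section
/- Every maximal abelian subgroup of PSL(2,ℂ) is conjugate to one of: the full diagonal group { z ↦ a z : a ∈ ℂ* }, the full translation group { z ↦ z + b : b ∈ ℂ }, or the Klein four-group { id, z ↦ −z, z ↦ 1/z, z ↦ −1/z }. -/
open Matrix Complex Filter Topology
noncomputable section

/-! ### Auxiliary infrastructure -/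

instance inst_s15 : Fact (Even (Fintype.card (Fin 2))) := ⟨by simp⟩

abbrev pp : SL2 → PSL2 := QuotientGroup.mk

lemma neg_one_coe : ((-1 : SL2) : Matrix (Fin 2) (Fin 2) ℂ) = -1 := by
  rw [Matrix.SpecialLinearGroup.coe_neg]; simp

lemma mem_center_iff' (A : SL2) : A ∈ Subgroup.center SL2 ↔ A = 1 ∨ A = -1 := by
  rw [Matrix.SpecialLinearGroup.mem_center_iff]
  constructor
  · rintro ⟨r, hr, hA⟩
    have hr2 : r * r = 1 := by rw [← sq]; simpa using hr
    rcases mul_self_eq_one_iff.mp hr2 with h | h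
    · left; apply Subtype.ext; rw [← hA, h]; simp
    · right; apply Subtype.ext; rw [← hA, h, neg_one_coe]
      simp [Matrix.scalar_apply, ← Matrix.diagonal_one, Matrix.diagonal_neg]
  · rintro (rfl | rfl)
    · exact ⟨1, by simp, by simp⟩
    · refine ⟨-1, by simp, ?_⟩
      rw [neg_one_coe]
      simp [Matrix.scalar_apply, ← Matrix.diagonal_one, Matrix.diagonal_neg]

lemma pp_eq (A B : SL2) : pp A = pp B ↔ A = B ∨ A = -B := by
  rw [show pp A = pp B ↔ _ from QuotientGroup.eq, mem_center_iff']
  constructor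
  · rintro (h | h)
    · left; have := congrArg (A * ·) h; simpa [mul_assoc] using this.symm
    · right; have := congrArg (A * ·) h; simp [mul_assoc] at this
      rw [this]; simp [mul_neg]
  · rintro (rfl | rfl) <;> simp

def mk2 (a b c d : ℂ) (h : a * d - b * c = 1) : SL2 :=
  ⟨!![a, b; c, d], by simpa [Matrix.det_fin_two_of] using h⟩

lemma pp_mul (A B : SL2) : pp A * pp B = pp (A * B) := rfl
lemma pp_inv (A : SL2) : (pp A)⁻¹ = pp A⁻¹ := rfl

lemma mk2_mul (a b c d e f g k : ℂ) (h1 h2) :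
    mk2 a b c d h1 * mk2 e f g k h2
      = mk2 (a*e+b*g) (a*f+b*k) (c*e+d*g) (c*f+d*k)
        (by linear_combination (e*k - f*g) * h1 + h2) := by
  apply Subtype.ext; rw [Matrix.SpecialLinearGroup.coe_mul]; simp [mk2, Matrix.mul_fin_two]

lemma mat_eq_iff (a b c d e f g k : ℂ) :
    !![a,b;c,d] = !![e,f;g,k] ↔ a = e ∧ b = f ∧ c = g ∧ d = k := by
  constructor
  · intro h
    exact ⟨by simpa using congr_fun₂ h 0 0, by simpa using congr_fun₂ h 0 1,
      by simpa using congr_fun₂ h 1 0, by simpa using congr_fun₂ h 1 1⟩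
  · rintro ⟨rfl, rfl, rfl, rfl⟩; rfl

lemma mk2_eq_iff (a b c d e f g k : ℂ) (h1 h2) :
    mk2 a b c d h1 = mk2 e f g k h2 ↔ a = e ∧ b = f ∧ c = g ∧ d = k := by
  exact Subtype.ext_iff.trans (mat_eq_iff _ _ _ _ _ _ _ _)

lemma mk2_congr {a b c d e f g k : ℂ} {h1 h2} (he : a = e) (hf : b = f) (hg : c = g)
    (hk : d = k) : mk2 a b c d h1 = mk2 e f g k h2 := by
  rw [mk2_eq_iff]; exact ⟨he, hf, hg, hk⟩

lemma neg_mk2 (a b c d : ℂ) (h1) :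
    -mk2 a b c d h1 = mk2 (-a) (-b) (-c) (-d) (by linear_combination h1) := by
  apply Subtype.ext
  rw [Matrix.SpecialLinearGroup.coe_neg]
  simp [mk2]

lemma mk2_inv (a b c d : ℂ) (h) :
    (mk2 a b c d h)⁻¹ = mk2 d (-b) (-c) a (by linear_combination h) := by
  apply Subtype.ext
  rw [Matrix.SpecialLinearGroup.coe_inv]
  simp [mk2, Matrix.adjugate_fin_two]

lemma SL2_eta (B : SL2) : B = mk2 (B.1 0 0) (B.1 0 1) (B.1 1 0) (B.1 1 1)
    (by have := B.2; rw [Matrix.det_fin_two] at this; linear_combination this) :=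
  Subtype.ext (Matrix.eta_fin_two B.1)

lemma sl2_cases (B : SL2) : ∃ a b c d h, B = mk2 a b c d h := ⟨_, _, _, _, _, SL2_eta B⟩

lemma mk2_one : (1 : SL2) = mk2 1 0 0 1 (by ring) := by
  apply Subtype.ext; simp [mk2, Matrix.one_fin_two]

lemma pp_one : (1 : PSL2) = pp (mk2 1 0 0 1 (by ring)) := congrArg pp mk2_one

lemma mk2_eq_one_iff (a b c d : ℂ) (h) :
    mk2 a b c d h = 1 ↔ a = 1 ∧ b = 0 ∧ c = 0 ∧ d = 1 := by
  rw [mk2_one, mk2_eq_iff]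

lemma pp_mk2_eq_one_iff (a b c d : ℂ) (h) :
    pp (mk2 a b c d h) = 1 ↔ (a = 1 ∧ b = 0 ∧ c = 0 ∧ d = 1) ∨
      (a = -1 ∧ b = 0 ∧ c = 0 ∧ d = -1) := by
  rw [pp_one, pp_eq, neg_mk2, mk2_eq_iff, mk2_eq_iff]
  constructor
  · rintro (h | h)
    · exact Or.inl h
    · right; refine ⟨h.1, ?_, ?_, h.2.2.2⟩ <;> [skip; skip] <;>
        [linear_combination h.2.1; linear_combination h.2.2.1]
  · rintro (h | h)
    · exact Or.inl h
    · right; refine ⟨h.1, ?_, ?_, h.2.2.2⟩ <;>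
        [linear_combination h.2.1; linear_combination h.2.2.1]

/-- Conversion lemmas. -/
lemma Tr_eq_s15 (b : ℂ) : Tr b = pp (mk2 1 b 0 1 (by ring)) := rfl
lemma Dg_eq_s15 (t : ℂ) : Dg t = pp (mk2 (Complex.exp (t/2)) 0 0 (Complex.exp (-(t/2)))
    (by rw [← Complex.exp_add]; simp)) := rfl
lemma iotaP_eq : iotaP = pp (mk2 0 I I 0 (by simp [Complex.I_mul_I])) := rfl
lemma negP_eq : negP = pp (mk2 I 0 0 (-I) (by simp [Complex.I_mul_I])) := rfl

/-! ### Group laws -/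

lemma Tr_add (a b : ℂ) : Tr a * Tr b = Tr (a + b) := by
  rw [Tr_eq_s15, Tr_eq_s15, Tr_eq_s15, pp_mul, mk2_mul]
  exact congrArg pp (mk2_congr (by ring) (by ring) (by ring) (by ring))

lemma Tr_zero : Tr 0 = 1 := by rw [Tr_eq_s15, pp_one]

lemma Dg_add (a b : ℂ) : Dg a * Dg b = Dg (a + b) := by
  rw [Dg_eq_s15, Dg_eq_s15, Dg_eq_s15, pp_mul, mk2_mul]
  refine congrArg pp (mk2_congr ?_ (by ring) (by ring) ?_) <;>
    rw [← Complex.exp_add] <;> ring_nf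

lemma Dg_zero : Dg 0 = 1 := by
  rw [Dg_eq_s15, pp_one]
  exact congrArg pp (mk2_congr (by norm_num) rfl rfl (by norm_num))

lemma Tr_inv (a : ℂ) : (Tr a)⁻¹ = Tr (-a) :=
  inv_eq_of_mul_eq_one_right (by rw [Tr_add]; simp [Tr_zero])

lemma Dg_inv (a : ℂ) : (Dg a)⁻¹ = Dg (-a) :=
  inv_eq_of_mul_eq_one_right (by rw [Dg_add]; simp [Dg_zero])

/-- The diagonal subgroup. -/
def DG : Subgroup PSL2 where
  carrier := Dset
  one_mem' := ⟨0, Dg_zero⟩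
  mul_mem' := by rintro _ _ ⟨s, rfl⟩ ⟨t, rfl⟩; exact ⟨s + t, (Dg_add s t).symm⟩
  inv_mem' := by rintro _ ⟨s, rfl⟩; exact ⟨-s, (Dg_inv s).symm⟩

/-- The translation subgroup. -/
def TG : Subgroup PSL2 where
  carrier := Tset
  one_mem' := ⟨0, Tr_zero⟩
  mul_mem' := by rintro _ _ ⟨s, rfl⟩ ⟨t, rfl⟩; exact ⟨s + t, (Tr_add s t).symm⟩
  inv_mem' := by rintro _ ⟨s, rfl⟩; exact ⟨-s, (Tr_inv s).symm⟩

lemma DG_ab : ∀ a ∈ DG, ∀ b ∈ DG, a * b = b * a := by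
  rintro _ ⟨s, rfl⟩ _ ⟨t, rfl⟩
  rw [Dg_add, Dg_add, add_comm]

lemma TG_ab : ∀ a ∈ TG, ∀ b ∈ TG, a * b = b * a := by
  rintro _ ⟨s, rfl⟩ _ ⟨t, rfl⟩
  rw [Tr_add, Tr_add, add_comm]

lemma negP_sq : negP * negP = 1 := by
  rw [negP_eq, pp_mul, mk2_mul, pp_one, pp_eq]
  right
  rw [neg_mk2]
  exact mk2_congr (by simp [Complex.I_mul_I]) (by ring) (by ring) (by simp [Complex.I_mul_I])

lemma iotaP_sq : iotaP * iotaP = 1 := by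
  rw [iotaP_eq, pp_mul, mk2_mul, pp_one, pp_eq]
  right
  rw [neg_mk2]
  exact mk2_congr (by simp [Complex.I_mul_I]) (by ring) (by ring) (by simp [Complex.I_mul_I])

lemma ni_comm : iotaP * negP = negP * iotaP := by
  rw [iotaP_eq, negP_eq, pp_mul, pp_mul, mk2_mul, mk2_mul, pp_eq]
  right
  rw [neg_mk2]
  exact mk2_congr (by ring) (by ring) (by ring) (by ring)

lemma ni_sq : (negP * iotaP) * (negP * iotaP) = 1 := by
  rw [show (negP * iotaP) * (negP * iotaP) = negP * (iotaP * negP) * iotaP by group,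
    ni_comm, show negP * (negP * iotaP) * iotaP = (negP * negP) * (iotaP * iotaP) by group,
    negP_sq, iotaP_sq, one_mul]

lemma kn_ni : negP * (negP * iotaP) = iotaP := by rw [← mul_assoc, negP_sq, one_mul]
lemma ki_ni : iotaP * (negP * iotaP) = negP := by
  rw [← mul_assoc, ni_comm, mul_assoc, iotaP_sq, mul_one]
lemma kni_n : (negP * iotaP) * negP = iotaP := by
  rw [mul_assoc, ni_comm, ← mul_assoc, negP_sq, one_mul]
lemma kni_i : (negP * iotaP) * iotaP = negP := by rw [mul_assoc, iotaP_sq, mul_one]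

/-- The Klein four subgroup. -/
def KleinG : Subgroup PSL2 where
  carrier := {1, negP, iotaP, negP * iotaP}
  one_mem' := Or.inl rfl
  mul_mem' := by
    rintro a b (rfl | rfl | rfl | rfl) (rfl | rfl | rfl | rfl) <;>
      simp only [Set.mem_insert_iff, Set.mem_singleton_iff, one_mul, mul_one,
        negP_sq, iotaP_sq, ni_comm, kn_ni, ki_ni, kni_n, kni_i, ni_sq] <;>
      tauto
  inv_mem' := by
    rintro a (rfl | rfl | rfl | rfl) <;>
      [rw [inv_one]; rw [inv_eq_of_mul_eq_one_right negP_sq];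
       rw [inv_eq_of_mul_eq_one_right iotaP_sq]; rw [inv_eq_of_mul_eq_one_right ni_sq]] <;>
      simp only [Set.mem_insert_iff, Set.mem_singleton_iff] <;> tauto

lemma Klein_ab : ∀ a ∈ KleinG, ∀ b ∈ KleinG, a * b = b * a := by
  rintro a (rfl | rfl | rfl | rfl) b (rfl | rfl | rfl | rfl) <;>
    simp only [one_mul, mul_one, negP_sq, iotaP_sq, ni_comm, kn_ni, ki_ni, kni_n, kni_i, ni_sq]

/-! ### Complex helpers -/

lemma exists_sqrt (s : ℂ) (hs : s ≠ 0) : ∃ r : ℂ, r ≠ 0 ∧ r * r = s :=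
  ⟨Complex.exp (Complex.log s / 2), Complex.exp_ne_zero _, by
    rw [← Complex.exp_add]
    ring_nf
    rw [Complex.exp_log hs]⟩

lemma sq_eq_neg_one {z : ℂ} (h : z * z = -1) : z = I ∨ z = -I := by
  have : (z - I) * (z + I) = 0 := by
    have := Complex.I_mul_I
    linear_combination h - this
  rcases mul_eq_zero.mp this with h' | h'
  · left; linear_combination h'
  · right; linear_combination h'

/-! ### Centralizer computations -/

lemma mem_TG (a b c d : ℂ) (hdet) (ha : a = 1 ∨ a = -1) (hc : c = 0) (hd : d = a) :
    pp (mk2 a b c d hdet) ∈ TG := by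
  rcases ha with rfl | rfl
  · refine ⟨b, ?_⟩
    rw [Tr_eq_s15]
    exact congrArg pp (mk2_congr rfl rfl hc.symm hd.symm)
  · refine ⟨-b, ?_⟩
    rw [Tr_eq_s15, pp_eq]
    right
    rw [neg_mk2]
    exact mk2_congr (by norm_num) (by norm_num) (by rw [hc]; norm_num) (by rw [hd]; norm_num)

lemma cent_T (g : PSL2) (hcm : g * Tr 1 = Tr 1 * g) : g ∈ TG := by
  obtain ⟨B, rfl⟩ := QuotientGroup.mk_surjective g
  obtain ⟨a, b, c, d, hdet, rfl⟩ := sl2_cases B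
  rw [Tr_eq_s15, pp_mul, pp_mul, mk2_mul, mk2_mul, pp_eq] at hcm
  rcases hcm with h | h
  · rw [mk2_eq_iff] at h
    obtain ⟨h1, h2, h3, h4⟩ := h
    have hc : c = 0 := by linear_combination -h1
    have had : a = d := by linear_combination h2
    have ha : a * a = 1 := by linear_combination hdet + a * h2 - b * h1
    exact mem_TG a b c d hdet (mul_self_eq_one_iff.mp ha) hc had.symm
  · rw [neg_mk2, mk2_eq_iff] at h
    obtain ⟨h1, h2, h3, h4⟩ := h
    exfalso
    have hc : c = 0 := by linear_combination h3 / 2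
    have hd : d = 0 := by linear_combination h4 / 2 - h3 / 4
    have ha : a = 0 := by linear_combination h1 / 2 - h3 / 4
    apply one_ne_zero (α := ℂ)
    linear_combination -hdet + d * ha - b * hc

lemma mem_DG (a b c d : ℂ) (hdet) (hb : b = 0) (hc : c = 0) :
    pp (mk2 a b c d hdet) ∈ DG := by
  have had : a * d = 1 := by linear_combination hdet + c * hb
  have ha0 : a ≠ 0 := left_ne_zero_of_mul_eq_one had
  refine ⟨2 * Complex.log a, ?_⟩
  rw [Dg_eq_s15]
  refine congrArg pp (mk2_congr ?_ hb.symm hc.symm ?_)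
  · rw [show 2 * Complex.log a / 2 = Complex.log a by ring, Complex.exp_log ha0]
  · rw [show -(2 * Complex.log a / 2) = -Complex.log a by ring, Complex.exp_neg,
      Complex.exp_log ha0]
    exact inv_eq_of_mul_eq_one_right had

lemma cent_diag (lam mu a b c d : ℂ) (hdm : lam * mu - 0 * 0 = 1) (hdet : a * d - b * c = 1)
    (hne : lam * lam ≠ 1) (hne2 : lam * lam ≠ -1)
    (hcm : pp (mk2 a b c d hdet) * pp (mk2 lam 0 0 mu hdm)
      = pp (mk2 lam 0 0 mu hdm) * pp (mk2 a b c d hdet)) :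
    b = 0 ∧ c = 0 := by
  have hlm : lam * mu = 1 := by linear_combination hdm
  have hl0 : lam ≠ 0 := left_ne_zero_of_mul_eq_one hlm
  have hm0 : mu ≠ 0 := right_ne_zero_of_mul_eq_one hlm
  have hml : mu - lam ≠ 0 := by
    intro hEq
    apply hne
    have : mu = lam := by linear_combination hEq
    rw [this] at hlm; exact hlm
  have hpl : mu + lam ≠ 0 := by
    intro hEq
    apply hne2
    linear_combination lam * hEq - hlm
  rw [pp_mul, pp_mul, mk2_mul, mk2_mul, pp_eq] at hcm
  rcases hcm with h | h
  · rw [mk2_eq_iff] at h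
    obtain ⟨h1, h2, h3, h4⟩ := h
    constructor
    · have hb : b * (mu - lam) = 0 := by linear_combination h2
      rcases mul_eq_zero.mp hb with hb | hb
      · exact hb
      · exact absurd hb hml
    · have hc : c * (mu - lam) = 0 := by linear_combination -h3
      rcases mul_eq_zero.mp hc with hc | hc
      · exact hc
      · exact absurd hc hml
  · rw [neg_mk2, mk2_eq_iff] at h
    obtain ⟨h1, h2, h3, h4⟩ := h
    exfalso
    have ha : a = 0 := by
      have : a * (2 * lam) = 0 := by linear_combination h1
      rcases mul_eq_zero.mp this with h' | h'
      · exact h'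
      · exact absurd (by linear_combination h' / 2) hl0
    have hd : d = 0 := by
      have : d * (2 * mu) = 0 := by linear_combination h4
      rcases mul_eq_zero.mp this with h' | h'
      · exact h'
      · exact absurd (by linear_combination h' / 2) hm0
    have hb : b = 0 := by
      have : b * (mu + lam) = 0 := by linear_combination h2
      rcases mul_eq_zero.mp this with h' | h'
      · exact h'
      · exact absurd h' hpl
    apply one_ne_zero (α := ℂ)
    linear_combination -hdet + d * ha - c * hb

lemma cent_D (t : ℂ) (h1 : Complex.exp t ≠ 1) (hm1 : Complex.exp t ≠ -1) (g : PSL2)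
    (hcm : g * Dg t = Dg t * g) : g ∈ DG := by
  obtain ⟨B, rfl⟩ := QuotientGroup.mk_surjective g
  obtain ⟨a, b, c, d, hdet, rfl⟩ := sl2_cases B
  rw [Dg_eq_s15] at hcm
  have hdm : Complex.exp (t/2) * Complex.exp (-(t/2)) - 0 * 0 = 1 := by
    rw [← Complex.exp_add]; simp
  have hsq : Complex.exp (t/2) * Complex.exp (t/2) = Complex.exp t := by
    rw [← Complex.exp_add]; ring_nf
  obtain ⟨hb, hc⟩ := cent_diag _ _ a b c d hdm hdet
    (by rw [hsq]; exact h1) (by rw [hsq]; exact hm1) hcm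
  exact mem_DG a b c d hdet hb hc

lemma cent_neg (g : PSL2) (hcm : g * negP = negP * g) :
    (∃ (a d : ℂ) (h : a * d - 0 * 0 = 1), g = pp (mk2 a 0 0 d h)) ∨
    (∃ (b c : ℂ) (h : 0 * 0 - b * c = 1), g = pp (mk2 0 b c 0 h)) := by
  obtain ⟨B, rfl⟩ := QuotientGroup.mk_surjective g
  obtain ⟨a, b, c, d, hdet, rfl⟩ := sl2_cases B
  rw [negP_eq, pp_mul, pp_mul, mk2_mul, mk2_mul, pp_eq] at hcm
  rcases hcm with h | h
  · rw [mk2_eq_iff] at h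
    obtain ⟨h1, h2, h3, h4⟩ := h
    have hb : b = 0 := by
      have : b * (2 * I) = 0 := by linear_combination -h2
      rcases mul_eq_zero.mp this with h' | h'
      · exact h'
      · exact absurd (by linear_combination h' / 2) I_ne_zero
    have hc : c = 0 := by
      have : c * (2 * I) = 0 := by linear_combination h3
      rcases mul_eq_zero.mp this with h' | h'
      · exact h'
      · exact absurd (by linear_combination h' / 2) I_ne_zero
    left
    exact ⟨a, d, by linear_combination hdet + c * hb,
      congrArg pp (mk2_congr rfl hb hc rfl)⟩
  · rw [neg_mk2, mk2_eq_iff] at h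
    obtain ⟨h1, h2, h3, h4⟩ := h
    have ha : a = 0 := by
      have : a * (2 * I) = 0 := by linear_combination h1
      rcases mul_eq_zero.mp this with h' | h'
      · exact h'
      · exact absurd (by linear_combination h' / 2) I_ne_zero
    have hd : d = 0 := by
      have : d * (2 * I) = 0 := by linear_combination -h4
      rcases mul_eq_zero.mp this with h' | h'
      · exact h'
      · exact absurd (by linear_combination h' / 2) I_ne_zero
    right
    exact ⟨b, c, by linear_combination hdet - d * ha,
      congrArg pp (mk2_congr ha rfl rfl hd)⟩

lemma niP_eq : negP * iotaP = pp (mk2 0 (-1) 1 0 (by ring)) := by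
  rw [negP_eq, iotaP_eq, pp_mul, mk2_mul]
  exact congrArg pp (mk2_congr (by ring) (by simp [Complex.I_mul_I])
    (by simp [Complex.I_mul_I]) (by ring))

lemma iotaP_ne_one : iotaP ≠ 1 := by
  intro hh
  rw [iotaP_eq, pp_mk2_eq_one_iff] at hh
  rcases hh with ⟨h, -⟩ | ⟨h, -⟩ <;> simp at h

lemma iotaP_ne_negP : iotaP ≠ negP := by
  intro hh
  rw [iotaP_eq, negP_eq, pp_eq, neg_mk2, mk2_eq_iff, mk2_eq_iff] at hh
  rcases hh with ⟨h, -⟩ | ⟨h, -⟩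
  · exact I_ne_zero h.symm
  · rw [eq_comm, neg_eq_zero] at h; exact I_ne_zero h

lemma Tr_one_ne_one : Tr 1 ≠ 1 := by
  intro hh
  rw [Tr_eq_s15, pp_mk2_eq_one_iff] at hh
  rcases hh with ⟨-, h, -⟩ | ⟨h, -⟩ <;> norm_num at h

/-- A diagonal element whose square is trivial is `1` or `negP`. -/
lemma diag_invol (a d : ℂ) (h : a * d - 0 * 0 = 1)
    (hsq : pp (mk2 a 0 0 d h) * pp (mk2 a 0 0 d h) = 1) :
    pp (mk2 a 0 0 d h) = 1 ∨ pp (mk2 a 0 0 d h) = negP := by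
  have had : a * d = 1 := by linear_combination h
  have ha0 : a ≠ 0 := left_ne_zero_of_mul_eq_one had
  rw [pp_mul, mk2_mul, pp_mk2_eq_one_iff] at hsq
  rcases hsq with ⟨h1, -, -, -⟩ | ⟨h1, -, -, -⟩
  · -- a² = 1
    have ha : a * a = 1 := by linear_combination h1
    have hda : d = a := by
      have : a * (d - a) = 0 := by linear_combination had - ha
      rcases mul_eq_zero.mp this with h' | h'
      · exact absurd h' ha0
      · linear_combination h'
    left
    rw [pp_mk2_eq_one_iff]
    rcases mul_self_eq_one_iff.mp ha with rfl | rfl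
    · exact Or.inl ⟨rfl, rfl, rfl, hda⟩
    · exact Or.inr ⟨rfl, rfl, rfl, hda⟩
  · -- a² = -1
    have ha : a * a = -1 := by linear_combination h1
    have hda : d = -a := by
      have : a * (d + a) = 0 := by linear_combination had + ha
      rcases mul_eq_zero.mp this with h' | h'
      · exact absurd h' ha0
      · linear_combination h'
    right
    rw [negP_eq, pp_eq]
    rcases sq_eq_neg_one ha with rfl | rfl
    · exact Or.inl (mk2_congr rfl rfl rfl (by simp [hda]))
    · right
      rw [neg_mk2]
      exact mk2_congr (by ring) (by ring) (by ring) (by simp [hda])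

/-- A diagonal element commuting with `iotaP` is `1` or `negP`. -/
lemma diag_comm_iota (a d : ℂ) (h : a * d - 0 * 0 = 1)
    (hcm : pp (mk2 a 0 0 d h) * iotaP = iotaP * pp (mk2 a 0 0 d h)) :
    pp (mk2 a 0 0 d h) = 1 ∨ pp (mk2 a 0 0 d h) = negP := by
  have had : a * d = 1 := by linear_combination h
  have ha0 : a ≠ 0 := left_ne_zero_of_mul_eq_one had
  rw [iotaP_eq, pp_mul, pp_mul, mk2_mul, mk2_mul, pp_eq] at hcm
  rcases hcm with hc | hc
  · rw [mk2_eq_iff] at hc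
    obtain ⟨-, h2, -, -⟩ := hc
    have hda : a = d := by
      have : (a - d) * I = 0 := by linear_combination h2
      rcases mul_eq_zero.mp this with h' | h'
      · linear_combination h'
      · exact absurd h' I_ne_zero
    have ha : a * a = 1 := by linear_combination had - a * hda.symm
    left
    rw [pp_mk2_eq_one_iff]
    rcases mul_self_eq_one_iff.mp ha with rfl | rfl
    · exact Or.inl ⟨rfl, rfl, rfl, hda.symm⟩
    · exact Or.inr ⟨rfl, rfl, rfl, hda.symm⟩
  · rw [neg_mk2, mk2_eq_iff] at hc
    obtain ⟨-, h2, -, -⟩ := hc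
    have hda : d = -a := by
      have : (a + d) * I = 0 := by linear_combination h2
      rcases mul_eq_zero.mp this with h' | h'
      · linear_combination h'
      · exact absurd h' I_ne_zero
    have ha : a * a = -1 := by linear_combination a * hda - had
    right
    rw [negP_eq, pp_eq]
    rcases sq_eq_neg_one ha with rfl | rfl
    · exact Or.inl (mk2_congr rfl rfl rfl (by simp [hda]))
    · right
      rw [neg_mk2]
      exact mk2_congr (by ring) (by ring) (by ring) (by simp [hda])

/-- An antidiagonal element commuting with `iotaP` is `iotaP` or `negP * iotaP`. -/
lemma adiag_comm_iota (b c : ℂ) (h : 0 * 0 - b * c = 1)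
    (hcm : pp (mk2 0 b c 0 h) * iotaP = iotaP * pp (mk2 0 b c 0 h)) :
    pp (mk2 0 b c 0 h) = iotaP ∨ pp (mk2 0 b c 0 h) = negP * iotaP := by
  have hbc : b * c = -1 := by linear_combination -h
  rw [iotaP_eq, pp_mul, pp_mul, mk2_mul, mk2_mul, pp_eq] at hcm
  rcases hcm with hc' | hc'
  · rw [mk2_eq_iff] at hc'
    obtain ⟨h1, -, -, -⟩ := hc'
    have hcb : c = b := by
      have : (b - c) * I = 0 := by linear_combination h1
      rcases mul_eq_zero.mp this with h' | h'
      · linear_combination -h'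
      · exact absurd h' I_ne_zero
    have hb : b * b = -1 := by linear_combination hbc - b * hcb
    left
    rw [iotaP_eq, pp_eq]
    rcases sq_eq_neg_one hb with rfl | rfl
    · exact Or.inl (mk2_congr rfl rfl hcb rfl)
    · right
      rw [neg_mk2]
      exact mk2_congr (by ring) (by ring) (by simp [hcb]) (by ring)
  · rw [neg_mk2, mk2_eq_iff] at hc'
    obtain ⟨h1, -, -, -⟩ := hc'
    have hcb : c = -b := by
      have : (b + c) * I = 0 := by linear_combination h1
      rcases mul_eq_zero.mp this with h' | h'
      · linear_combination h'
      · exact absurd h' I_ne_zero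
    have hb : b * b = 1 := by linear_combination b * hcb - hbc
    right
    rw [niP_eq, pp_eq]
    rcases mul_self_eq_one_iff.mp hb with rfl | rfl
    · right
      rw [neg_mk2]
      exact mk2_congr (by ring) (by ring) (by simp [hcb]) (by ring)
    · exact Or.inl (mk2_congr rfl rfl (by simp [hcb]) rfl)

/-! ### Conjugation machinery -/

lemma conj_pp' (P A B : SL2) (h : A * P = P * B) :
    (pp P)⁻¹ * pp A * pp P = pp B := by
  have : P⁻¹ * A * P = B := by
    rw [mul_assoc, h, ← mul_assoc, inv_mul_cancel, one_mul]
  rw [pp_inv, pp_mul, pp_mul, this]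

lemma conj_comp {c1 c2 g x y : PSL2} (h1 : c1 * g * c1⁻¹ = x) (h2 : c2 * x * c2⁻¹ = y) :
    (c2 * c1) * g * (c2 * c1)⁻¹ = y := by
  rw [← h2, ← h1]; group

lemma diag_to_Dg (a b c d : ℂ) (hdet) (hb : b = 0) (hc : c = 0) :
    ∃ t : ℂ, Complex.exp t = a * a ∧ Dg t = pp (mk2 a b c d hdet) := by
  have had : a * d = 1 := by linear_combination hdet + c * hb
  have ha0 : a ≠ 0 := left_ne_zero_of_mul_eq_one had
  refine ⟨2 * Complex.log a, ?_, ?_⟩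
  · rw [show (2 : ℂ) * Complex.log a = Complex.log a + Complex.log a by ring,
      Complex.exp_add, Complex.exp_log ha0]
  · rw [Dg_eq_s15]
    refine congrArg pp (mk2_congr ?_ hb.symm hc.symm ?_)
    · rw [show 2 * Complex.log a / 2 = Complex.log a by ring, Complex.exp_log ha0]
    · rw [show -(2 * Complex.log a / 2) = -Complex.log a by ring, Complex.exp_neg,
        Complex.exp_log ha0]
      exact inv_eq_of_mul_eq_one_right had

/-! ### Classification of single elements up to conjugacy -/

lemma to_companion (a b c d : ℂ) (hdet : a * d - b * c = 1) (hbc : ¬(b = 0 ∧ c = 0)) :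
    ∃ q : PSL2, q * pp (mk2 a b c d hdet) * q⁻¹
      = pp (mk2 0 (-1) 1 (a + d) (by ring)) := by
  by_cases hc : c ≠ 0
  · obtain ⟨u, hu0, hu⟩ := exists_sqrt c⁻¹ (inv_ne_zero hc)
    have huc : u * u * c = 1 := by rw [hu]; field_simp
    refine ⟨(pp (mk2 u (a*u) 0 (c*u) (by linear_combination huc)))⁻¹, ?_⟩
    rw [inv_inv]
    apply conj_pp'
    rw [mk2_mul, mk2_mul, mk2_eq_iff]
    exact ⟨by ring, by linear_combination -u * hdet, by ring, by ring⟩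
  · push_neg at hc
    have hb : b ≠ 0 := by
      intro hb; exact hbc ⟨hb, hc⟩
    obtain ⟨u, hu0, hu⟩ := exists_sqrt (-b)⁻¹ (inv_ne_zero (neg_ne_zero.mpr hb))
    have hub : u * u * b = -1 := by
      rw [hu]; field_simp
    refine ⟨(pp (mk2 0 (b*u) u (d*u) (by linear_combination -hub)))⁻¹, ?_⟩
    rw [inv_inv]
    apply conj_pp'
    rw [mk2_mul, mk2_mul, mk2_eq_iff]
    subst hc
    exact ⟨by ring, by ring, by ring, by linear_combination -u * hdet⟩

lemma companion_classify (τ : ℂ) :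
    (∃ (q : PSL2) (t : ℂ), Complex.exp t ≠ 1 ∧
        q * pp (mk2 0 (-1) 1 τ (by ring)) * q⁻¹ = Dg t) ∨
    (∃ q : PSL2, q * pp (mk2 0 (-1) 1 τ (by ring)) * q⁻¹ = Tr 1) := by
  by_cases h2 : τ = 2
  · right
    subst h2
    refine ⟨(pp (mk2 I 0 (-I) (-I) (by simp [Complex.I_mul_I])))⁻¹, ?_⟩
    rw [inv_inv, Tr_eq_s15]
    apply conj_pp'
    rw [mk2_mul, mk2_mul, mk2_eq_iff]
    refine ⟨by ring, by ring, by ring, by ring⟩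
  by_cases h2' : τ = -2
  · right
    subst h2'
    have hM : pp (mk2 0 (-1) 1 (-2) (by ring)) = pp (mk2 0 1 (-1) 2 (by ring)) := by
      rw [pp_eq]; right; rw [neg_mk2]
      exact mk2_congr (by ring) (by ring) (by ring) (by ring)
    refine ⟨(pp (mk2 1 0 1 1 (by ring)))⁻¹, ?_⟩
    rw [inv_inv, Tr_eq_s15, hM]
    apply conj_pp'
    rw [mk2_mul, mk2_mul, mk2_eq_iff]
    refine ⟨by ring, by ring, by ring, by ring⟩
  · left
    have hs4 : τ * τ - 4 ≠ 0 := by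
      intro hEq
      have : (τ - 2) * (τ + 2) = 0 := by linear_combination hEq
      rcases mul_eq_zero.mp this with h' | h'
      · exact h2 (by linear_combination h')
      · exact h2' (by linear_combination h')
    obtain ⟨s, hs0, hs⟩ := exists_sqrt (τ * τ - 4) hs4
    set lam := (τ + s) / 2 with hlam
    have hquad : lam * lam - τ * lam + 1 = 0 := by
      rw [hlam]; linear_combination hs / 4
    have hfac : lam * (τ - lam) = 1 := by linear_combination -hquad
    have hl0 : lam ≠ 0 := left_ne_zero_of_mul_eq_one hfac
    set mu := τ - lam with hmu
    have hquadmu : mu * mu - τ * mu + 1 = 0 := by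
      rw [hmu]; linear_combination hquad
    have hdiff : lam - mu = s := by rw [hmu, hlam]; ring
    obtain ⟨u, hu0, hu⟩ := exists_sqrt s⁻¹ (inv_ne_zero hs0)
    have hus : u * u * s = 1 := by rw [hu]; field_simp
    have hdetQ : u * (-(mu * u)) - u * (-(lam * u)) = 1 := by
      linear_combination hus - u * u * hdiff
    obtain ⟨t, het, hDg⟩ := diag_to_Dg lam 0 0 mu (by linear_combination hfac) rfl rfl
    refine ⟨(pp (mk2 u u (-(lam * u)) (-(mu * u)) hdetQ))⁻¹, t, ?_, ?_⟩
    · rw [het]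
      intro hEq
      have h1 : (lam - 1) * (lam + 1) = 0 := by linear_combination hEq
      rcases mul_eq_zero.mp h1 with h' | h'
      · exact h2 (by linear_combination -hquad + (lam + 1 - τ) * h')
      · exact h2' (by linear_combination hquad + (τ + 1 - lam) * h')
    · rw [inv_inv, hDg]
      apply conj_pp'
      rw [mk2_mul, mk2_mul, mk2_eq_iff]
      exact ⟨by ring, by ring, by linear_combination u * hquad, by linear_combination u * hquadmu⟩

lemma classify (g : PSL2) (hg : g ≠ 1) :
    (∃ (c : PSL2) (t : ℂ), Complex.exp t ≠ 1 ∧ c * g * c⁻¹ = Dg t) ∨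
    (∃ c : PSL2, c * g * c⁻¹ = Tr 1) := by
  obtain ⟨B, rfl⟩ := QuotientGroup.mk_surjective g
  obtain ⟨a, b, c, d, hdet, rfl⟩ := sl2_cases B
  by_cases hbc : b = 0 ∧ c = 0
  · left
    obtain ⟨t, het, hDg⟩ := diag_to_Dg a b c d hdet hbc.1 hbc.2
    refine ⟨1, t, ?_, by rw [one_mul, inv_one, mul_one, hDg]⟩
    rw [het]
    intro ha
    apply hg
    rw [pp_mk2_eq_one_iff]
    have had : a * d = 1 := by linear_combination hdet + c * hbc.1
    have ha0 : a ≠ 0 := left_ne_zero_of_mul_eq_one had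
    have hda : d = a := by
      have : a * (d - a) = 0 := by linear_combination had - ha
      rcases mul_eq_zero.mp this with h' | h'
      · exact absurd h' ha0
      · linear_combination h'
    rcases mul_self_eq_one_iff.mp ha with rfl | rfl
    · exact Or.inl ⟨rfl, hbc.1, hbc.2, hda⟩
    · exact Or.inr ⟨rfl, hbc.1, hbc.2, hda⟩
  · obtain ⟨q, hq⟩ := to_companion a b c d hdet hbc
    rcases companion_classify (a + d) with ⟨q2, t, het, hq2⟩ | ⟨q2, hq2⟩
    · exact Or.inl ⟨q2 * q, t, het, conj_comp hq hq2⟩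
    · exact Or.inr ⟨q2 * q, conj_comp hq hq2⟩

/-! ### Maximality machinery -/

lemma conj_comm {c g h : PSL2} (hcomm : h * g = g * h) :
    (c * h * c⁻¹) * (c * g * c⁻¹) = (c * g * c⁻¹) * (c * h * c⁻¹) := by
  calc (c * h * c⁻¹) * (c * g * c⁻¹) = c * (h * g) * c⁻¹ := by group
    _ = c * (g * h) * c⁻¹ := by rw [hcomm]
    _ = (c * g * c⁻¹) * (c * h * c⁻¹) := by group

lemma comap_conj_ab (c : PSL2) (K : Subgroup PSL2) (hK : ∀ a ∈ K, ∀ b ∈ K, a * b = b * a) :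
    ∀ a ∈ Subgroup.comap ((MulAut.conj c).toMonoidHom : PSL2 →* PSL2) K,
      ∀ b ∈ Subgroup.comap ((MulAut.conj c).toMonoidHom : PSL2 →* PSL2) K, a * b = b * a := by
  intro a ha b hb
  rw [Subgroup.mem_comap] at ha hb
  have h2 : (MulAut.conj c) (a * b) = (MulAut.conj c) (b * a) := by
    rw [_root_.map_mul, _root_.map_mul]
    exact hK _ ha _ hb
  exact (MulAut.conj c).injective h2

lemma finish_conj (H : Subgroup PSL2)
    (hmax : ∀ K : Subgroup PSL2, (∀ a ∈ K, ∀ b ∈ K, a * b = b * a) → H ≤ K → K = H)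
    (c : PSL2) (K : Subgroup PSL2) (hK : ∀ a ∈ K, ∀ b ∈ K, a * b = b * a)
    (hsub : ∀ g ∈ H, c * g * c⁻¹ ∈ K) :
    (fun g => c * g * c⁻¹) '' (H : Set PSL2) = (K : Set PSL2) := by
  have key : Subgroup.comap ((MulAut.conj c).toMonoidHom : PSL2 →* PSL2) K = H := by
    apply hmax _ (comap_conj_ab c K hK)
    intro g hg
    rw [Subgroup.mem_comap]
    show (MulAut.conj c) g ∈ K
    rw [MulAut.conj_apply]
    exact hsub g hg
  ext x
  simp only [Set.mem_image, SetLike.mem_coe]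
  constructor
  · rintro ⟨g, hg, rfl⟩; exact hsub g hg
  · intro hx
    refine ⟨c⁻¹ * x * c, ?_, by group⟩
    rw [← key, Subgroup.mem_comap]
    show (MulAut.conj c) (c⁻¹ * x * c) ∈ K
    rw [MulAut.conj_apply]
    have : c * (c⁻¹ * x * c) * c⁻¹ = x := by group
    rw [this]
    exact hx

lemma Dg_negP (t : ℂ) (ht : Complex.exp t = -1) : Dg t = negP := by
  have hsq : Complex.exp (t/2) * Complex.exp (t/2) = -1 := by
    rw [← Complex.exp_add]; rw [show t/2 + t/2 = t by ring]; exact ht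
  have hlm : Complex.exp (t/2) * Complex.exp (-(t/2)) = 1 := by
    rw [← Complex.exp_add]; simp
  rw [Dg_eq_s15, negP_eq, pp_eq]
  rcases sq_eq_neg_one hsq with hl | hl
  · left
    refine mk2_congr hl rfl rfl ?_
    apply mul_left_cancel₀ I_ne_zero
    rw [show (I : ℂ) * -I = 1 by simp [Complex.I_mul_I], ← hl]
    exact hlm
  · right
    rw [neg_mk2]
    refine mk2_congr hl (by ring) (by ring) ?_
    have hh : Complex.exp (-(t/2)) = I := by
      apply mul_left_cancel₀ (neg_ne_zero.mpr I_ne_zero)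
      rw [show (-I : ℂ) * I = 1 by simp [Complex.I_mul_I], ← hl]
      exact hlm
    rw [hh]
    ring

lemma conj_pp'' (P A B : SL2) (h : P * A = B * P) : pp P * pp A * (pp P)⁻¹ = pp B := by
  have : P * A * P⁻¹ = B := by rw [h, mul_assoc, mul_inv_cancel, mul_one]
  rw [pp_inv, pp_mul, pp_mul, this]

/-- Every maximal abelian subgroup of `PSL(2,ℂ)` is conjugate to the full diagonal group
`{z ↦ a z : a ∈ ℂ*}`, the full translation group `{z ↦ z + b : b ∈ ℂ}`, or the Klein
four-group `{id, z ↦ -z, z ↦ 1/z, z ↦ -1/z}`. -/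
theorem stmt15 (H : Subgroup PSL2) (hab : ∀ a ∈ H, ∀ b ∈ H, a * b = b * a)
    (hmax : ∀ K : Subgroup PSL2, (∀ a ∈ K, ∀ b ∈ K, a * b = b * a) → H ≤ K → K = H) :
    ∃ c : PSL2,
      (fun g => c * g * c⁻¹) '' (H : Set PSL2) = Dset ∨
      (fun g => c * g * c⁻¹) '' (H : Set PSL2) = Tset ∨
      (fun g => c * g * c⁻¹) '' (H : Set PSL2) = {1, negP, iotaP, negP * iotaP} := by
  have hne : ∃ g ∈ H, g ≠ 1 := by
    by_contra hcon
    push_neg at hcon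
    have hle : H ≤ TG := by
      intro g hg
      rw [hcon g hg]
      exact TG.one_mem
    have hTG := hmax TG TG_ab hle
    have hmem : Tr 1 ∈ H := by rw [← hTG]; exact ⟨1, rfl⟩
    exact Tr_one_ne_one (hcon _ hmem)
  by_cases hA : ∃ g ∈ H, ∃ (c : PSL2) (t : ℂ),
      Complex.exp t ≠ 1 ∧ Complex.exp t ≠ -1 ∧ c * g * c⁻¹ = Dg t
  · obtain ⟨g, hgH, c, t, ht1, ht2, hc⟩ := hA
    refine ⟨c, Or.inl ?_⟩
    exact finish_conj H hmax c DG DG_ab (fun h hh => by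
      apply cent_D t ht1 ht2
      rw [← hc]
      exact conj_comm (hab h hh g hgH))
  by_cases hB : ∃ g ∈ H, ∃ c : PSL2, c * g * c⁻¹ = Tr 1
  · obtain ⟨g, hgH, c, hc⟩ := hB
    refine ⟨c, Or.inr (Or.inl ?_)⟩
    exact finish_conj H hmax c TG TG_ab (fun h hh => by
      apply cent_T
      rw [← hc]
      exact conj_comm (hab h hh g hgH))
  -- Case C : every nontrivial element of `H` is conjugate to `negP`.
  have hinv : ∀ g ∈ H, g ≠ 1 → ∃ c : PSL2, c * g * c⁻¹ = negP := by
    intro g hgH hg1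
    rcases classify g hg1 with ⟨c, t, ht, hc⟩ | ⟨c, hc⟩
    · by_cases htm : Complex.exp t = -1
      · exact ⟨c, hc.trans (Dg_negP t htm)⟩
      · exact absurd ⟨g, hgH, c, t, ht, htm, hc⟩ hA
    · exact absurd ⟨g, hgH, c, hc⟩ hB
  have hsq1 : ∀ g ∈ H, g * g = 1 := by
    intro g hgH
    by_cases hg1 : g = 1
    · rw [hg1, one_mul]
    · obtain ⟨c, hc⟩ := hinv g hgH hg1
      have h1 : (MulAut.conj c) (g * g) = 1 := by
        rw [_root_.map_mul]
        show (c * g * c⁻¹) * (c * g * c⁻¹) = 1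
        rw [hc]
        exact negP_sq
      exact (MulAut.conj c).injective (h1.trans (_root_.map_one (MulAut.conj c)).symm)
  obtain ⟨g₀, hg₀H, hg₀⟩ := hne
  obtain ⟨c₀, hc₀⟩ := hinv g₀ hg₀H hg₀
  have hccneg : ∀ h ∈ H, (c₀ * h * c₀⁻¹) * negP = negP * (c₀ * h * c₀⁻¹) := by
    intro h hh
    rw [← hc₀]
    exact conj_comm (hab h hh g₀ hg₀H)
  by_cases hD : ∀ h ∈ H, c₀ * h * c₀⁻¹ = 1 ∨ c₀ * h * c₀⁻¹ = negP
  · exfalso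
    have key := hmax (Subgroup.comap ((MulAut.conj c₀).toMonoidHom : PSL2 →* PSL2) KleinG)
      (comap_conj_ab c₀ KleinG Klein_ab) (by
        intro h hh
        rw [Subgroup.mem_comap]
        show (MulAut.conj c₀) h ∈ KleinG
        rw [MulAut.conj_apply]
        rcases hD h hh with h1 | h1 <;> rw [h1]
        · exact KleinG.one_mem
        · exact Or.inr (Or.inl rfl))
    have hx : c₀⁻¹ * iotaP * c₀ ∈ H := by
      rw [← key, Subgroup.mem_comap]
      show (MulAut.conj c₀) _ ∈ KleinG
      rw [MulAut.conj_apply]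
      rw [show c₀ * (c₀⁻¹ * iotaP * c₀) * c₀⁻¹ = iotaP from by group]
      exact Or.inr (Or.inr (Or.inl rfl))
    rcases hD _ hx with h1 | h1 <;>
      rw [show c₀ * (c₀⁻¹ * iotaP * c₀) * c₀⁻¹ = iotaP from by group] at h1
    · exact iotaP_ne_one h1
    · exact iotaP_ne_negP h1
  · push_neg at hD
    obtain ⟨h₁, hh₁H, hd1, hd2⟩ := hD
    rcases cent_neg (c₀ * h₁ * c₀⁻¹) (hccneg h₁ hh₁H) with ⟨a, d, hdt, hk⟩ | ⟨b, c', hdt, hk⟩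
    · exfalso
      have hsqk : pp (mk2 a 0 0 d hdt) * pp (mk2 a 0 0 d hdt) = 1 := by
        rw [← hk]
        rw [show (c₀ * h₁ * c₀⁻¹) * (c₀ * h₁ * c₀⁻¹) = c₀ * (h₁ * h₁) * c₀⁻¹ from by group]
        rw [hsq1 h₁ hh₁H, mul_one, mul_inv_cancel]
      rcases diag_invol a d hdt hsqk with h' | h'
      · exact hd1 (hk.trans h')
      · exact hd2 (hk.trans h')
    · have hb0 : b ≠ 0 := by
        intro hb
        rw [hb] at hdt
        simp at hdt
      obtain ⟨r, hr0, hr2⟩ := exists_sqrt (I * b⁻¹) (mul_ne_zero I_ne_zero (inv_ne_zero hb0))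
      have hrs : r * r⁻¹ = 1 := mul_inv_cancel₀ hr0
      have hr2b : r * r * b = I := by rw [hr2]; field_simp
      have hbc : b * c' = -1 := by linear_combination -hdt
      have hc'' : c' = I * r * r := by
        apply mul_left_cancel₀ hb0
        rw [hbc, show b * (I * r * r) = I * (r * r * b) from by ring, hr2b]
        simp [Complex.I_mul_I]
      have hEk : pp (mk2 r 0 0 r⁻¹ (by linear_combination hrs)) * pp (mk2 0 b c' 0 hdt) *
          (pp (mk2 r 0 0 r⁻¹ (by linear_combination hrs)))⁻¹ = iotaP := by
        rw [iotaP_eq]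
        apply conj_pp''
        rw [mk2_mul, mk2_mul, mk2_eq_iff]
        refine ⟨by ring, ?_, ?_, by ring⟩
        · field_simp
          linear_combination hr2b
        · field_simp
          linear_combination hc''
      have hEneg : pp (mk2 r 0 0 r⁻¹ (by linear_combination hrs)) * negP *
          (pp (mk2 r 0 0 r⁻¹ (by linear_combination hrs)))⁻¹ = negP := by
        rw [negP_eq]
        apply conj_pp''
        rw [mk2_mul, mk2_mul, mk2_eq_iff]
        exact ⟨by ring, by ring, by ring, by ring⟩
      set e : PSL2 := pp (mk2 r 0 0 r⁻¹ (by linear_combination hrs)) with he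
      refine ⟨e * c₀, Or.inr (Or.inr ?_)⟩
      have hg₀c : (e * c₀) * g₀ * (e * c₀)⁻¹ = negP := conj_comp hc₀ hEneg
      have hh₁c : (e * c₀) * h₁ * (e * c₀)⁻¹ = iotaP := conj_comp hk hEk
      exact finish_conj H hmax (e * c₀) KleinG Klein_ab (fun h hh => by
        have hkneg : ((e * c₀) * h * (e * c₀)⁻¹) * negP = negP * ((e * c₀) * h * (e * c₀)⁻¹) := by
          rw [← hg₀c]
          exact conj_comm (hab h hh g₀ hg₀H)
        have hkiota : ((e * c₀) * h * (e * c₀)⁻¹) * iotaP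
            = iotaP * ((e * c₀) * h * (e * c₀)⁻¹) := by
          rw [← hh₁c]
          exact conj_comm (hab h hh h₁ hh₁H)
        rcases cent_neg _ hkneg with ⟨a, d, hdt', hk'⟩ | ⟨b', c'', hdt', hk'⟩
        · rcases diag_comm_iota a d hdt' (by rw [← hk']; exact hkiota) with h' | h'
          · exact Or.inl (hk'.trans h')
          · exact Or.inr (Or.inl (hk'.trans h'))
        · rcases adiag_comm_iota b' c'' hdt' (by rw [← hk']; exact hkiota) with h' | h'
          · exact Or.inr (Or.inr (Or.inl (hk'.trans h')))
          · exact Or.inr (Or.inr (Or.inr (hk'.trans h'))))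
end
end

section
/- The space of closed subgroups of the circle group S¹, with the Chabauty topology, is homeomorphic to the one-point compactification of ℕ: the finite cyclic subgroups of order n converge to S¹ itself as n → ∞. -/
open Filter Topology
open Real Set


noncomputable def ζm (m : ℕ) : Circle := Circle.exp (2 * π / m)

noncomputable def mu (m : ℕ) : Subgroup Circle := Subgroup.zpowers (ζm m)

lemma Circle.exp_zpow (a : ℝ) (j : ℤ) : Circle.exp a ^ j = Circle.exp (j * a) := by
  ext
  show (Complex.exp (a * Complex.I)) ^ j = Complex.exp (((j : ℝ) * a : ℝ) * Complex.I)
  rw [← Complex.exp_int_mul]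
  congr 1
  push_cast
  ring

lemma Circle.exp_npow (a : ℝ) (n : ℕ) : Circle.exp a ^ n = Circle.exp (n * a) := by
  have := Circle.exp_zpow a (n : ℤ)
  rw [zpow_natCast] at this
  rw [this]; norm_num

lemma zeta_pow_self {m : ℕ} (hm : 0 < m) : ζm m ^ m = 1 := by
  rw [ζm, Circle.exp_npow]
  rw [show (m : ℝ) * (2 * π / m) = 2 * π by field_simp]
  exact Circle.exp_two_pi

lemma mem_mu_iff {m : ℕ} (hm : 0 < m) {x : Circle} : x ∈ mu m ↔ x ^ m = 1 := by
  constructor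
  · rintro ⟨k, rfl⟩
    rw [← zpow_natCast, ← zpow_mul, mul_comm (k : ℤ), zpow_mul, zpow_natCast,
      zeta_pow_self hm, one_zpow]
  · intro hx
    have h1 : Circle.exp (Complex.arg x) = x := Circle.exp_arg x
    have h2 : Circle.exp (m * Complex.arg x) = 1 := by
      rw [← Circle.exp_npow, h1]; exact hx
    obtain ⟨n, hn⟩ := Circle.exp_eq_one.mp h2
    refine ⟨n, ?_⟩
    show ζm m ^ n = x
    rw [ζm, Circle.exp_zpow, ← h1]
    congr 1
    have hm' : (m : ℝ) ≠ 0 := Nat.cast_ne_zero.mpr hm.ne'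
    field_simp
    linarith [hn]

lemma orderOf_zeta {m : ℕ} (hm : 0 < m) : orderOf (ζm m) = m := by
  rw [orderOf_eq_iff hm]
  refine ⟨zeta_pow_self hm, fun n hn hn' h1 => ?_⟩
  rw [ζm, Circle.exp_npow] at h1
  obtain ⟨j, hj⟩ := Circle.exp_eq_one.mp h1
  have hm' : (m : ℝ) ≠ 0 := Nat.cast_ne_zero.mpr hm.ne'
  have hpi := Real.pi_ne_zero
  have hreal : (n : ℝ) = (j : ℝ) * m := by
    field_simp at hj
    nlinarith [Real.pi_pos, hj]
  have hint : (n : ℤ) = j * m := by exact_mod_cast hreal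
  have hdvd : (m : ℤ) ∣ (n : ℤ) := ⟨j, by linarith [hint]⟩
  have := Int.le_of_dvd (by exact_mod_cast hn') hdvd
  omega

lemma card_mu {m : ℕ} (hm : 0 < m) : Nat.card (mu m) = m := by
  rw [mu, Nat.card_zpowers, orderOf_zeta hm]

lemma mu_finite {m : ℕ} (hm : 0 < m) : ((mu m : Subgroup Circle) : Set Circle).Finite := by
  have : IsOfFinOrder (ζm m) := isOfFinOrder_iff_pow_eq_one.mpr ⟨m, hm, zeta_pow_self hm⟩
  exact this.finite_zpowers

lemma zeta_mem_mu (m : ℕ) : ζm m ∈ mu m := Subgroup.mem_zpowers _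

/-- Any finite subgroup of the circle is `mu` of its cardinality. -/
lemma subgroup_eq_mu {P : Subgroup Circle} (hf : ((P : Set Circle)).Finite) :
    P = mu (Nat.card P) := by
  have hfin : Finite P := hf.to_subtype
  have hpos : 0 < Nat.card P := Nat.card_pos
  have hle : P ≤ mu (Nat.card P) := by
    intro x hx
    rw [mem_mu_iff hpos]
    have h1 : (⟨x, hx⟩ : P) ^ (Nat.card P) = 1 := pow_card_eq_one'
    have := congrArg (Subtype.val) h1
    rw [SubmonoidClass.coe_pow] at this
    exact this
  have : Finite (mu (Nat.card P)) := (mu_finite hpos).to_subtype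
  exact Subgroup.eq_of_le_of_card_ge hle (le_of_eq (card_mu hpos))

instance : Infinite Circle := by
  have h : (Set.Ioc (-π) π).Infinite := Set.Ioc_infinite (by linarith [Real.pi_pos])
  have h2 : Infinite (Set.Ioc (-π) π) := h.to_subtype
  exact (Equiv.infinite_iff Circle.argEquiv).mpr h2

lemma exp_surjective : Function.Surjective Circle.exp := fun z => ⟨Complex.arg z, Circle.exp_arg z⟩

/-- The preimage of a subgroup of the circle under `Circle.exp`. -/
def argPre (H : Subgroup Circle) : AddSubgroup ℝ where
  carrier := Circle.exp ⁻¹' (H : Set Circle)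
  zero_mem' := by simp [Circle.exp_zero, H.one_mem]
  add_mem' := by
    intro a b ha hb
    simp only [Set.mem_preimage, SetLike.mem_coe, Circle.exp_add] at *
    exact H.mul_mem ha hb
  neg_mem' := by
    intro a ha
    simp only [Set.mem_preimage, SetLike.mem_coe, Circle.exp_neg] at *
    exact H.inv_mem ha

/-- Classification: a closed subgroup of the circle is either everything or finite. -/
lemma classify_s19 (H : Subgroup Circle) (hc : IsClosed (H : Set Circle)) :
    H = ⊤ ∨ ((H : Subgroup Circle) : Set Circle).Finite := by
  rcases AddSubgroup.dense_or_cyclic (argPre H) with hd | ⟨a, ha⟩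
  · left
    have h1 : Circle.exp '' (argPre H : Set ℝ) ⊆ (H : Set Circle) := by
      rintro _ ⟨t, ht, rfl⟩; exact ht
    have h2 : (Set.univ : Set Circle) ⊆ closure (Circle.exp '' (argPre H : Set ℝ)) := by
      have := image_closure_subset_closure_image (f := (Circle.exp : ℝ → Circle))
        (s := (argPre H : Set ℝ)) Circle.exp.continuous
      rw [hd.closure_eq] at this
      intro z _
      obtain ⟨t, ht⟩ := exp_surjective z
      exact this ⟨t, trivial, ht⟩
    have : (Set.univ : Set Circle) ⊆ (H : Set Circle) := by
      refine h2.trans ?_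
      rw [← hc.closure_eq]
      exact closure_mono h1
    ext x
    simp only [Subgroup.mem_top, iff_true]
    exact this (Set.mem_univ x)
  · right
    have h2pi : (2 * π) ∈ argPre H := by
      show Circle.exp (2 * π) ∈ H
      rw [Circle.exp_two_pi]; exact H.one_mem
    rw [ha, AddSubgroup.mem_closure_singleton] at h2pi
    obtain ⟨n, hn⟩ := h2pi
    have hn0 : n ≠ 0 := by
      rintro rfl
      simp at hn
    have hfo : IsOfFinOrder (Circle.exp a) := by
      rw [isOfFinOrder_iff_pow_eq_one]
      refine ⟨n.natAbs, Int.natAbs_pos.mpr hn0, ?_⟩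
      have hz : Circle.exp a ^ (n : ℤ) = 1 := by
        rw [Circle.exp_zpow]
        rw [show (n : ℝ) * a = n • a by simp]
        rw [hn, Circle.exp_two_pi]
      rcases Int.natAbs_eq n with h | h
      · rw [← zpow_natCast, ← h, hz]
      · rw [← zpow_natCast, show ((n.natAbs : ℤ)) = -n by omega, zpow_neg, hz, inv_one]
    refine Set.Finite.subset hfo.finite_zpowers ?_
    intro x hx
    have hax : Complex.arg x ∈ argPre H := by
      show Circle.exp (Complex.arg x) ∈ H
      rw [Circle.exp_arg]; exact hx
    rw [ha, AddSubgroup.mem_closure_singleton] at hax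
    obtain ⟨k, hk⟩ := hax
    refine ⟨k, ?_⟩
    show Circle.exp a ^ k = x
    rw [Circle.exp_zpow, show (k : ℝ) * a = k • a by simp, hk, Circle.exp_arg]

lemma dist_circle_eq (w v : Circle) : dist w v = ‖(w : ℂ) - (v : ℂ)‖ := by
  exact Complex.dist_eq (w : ℂ) v

lemma sq_dist_exp_one (θ : ℝ) :
    dist (Circle.exp θ) 1 ^ 2 = 2 - 2 * Real.cos θ := by
  rw [dist_circle_eq, Complex.sq_norm, Circle.coe_exp, Circle.coe_one, Complex.exp_mul_I]
  simp [Complex.normSq_apply, Complex.cos_ofReal_re, Complex.sin_ofReal_re]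
  nlinarith [Real.sin_sq_add_cos_sq θ]

/-- Any `mu e` with `e ≥ 2` contains an element far from `1`. -/
lemma exists_far_elt {e : ℕ} (he : 2 ≤ e) : ∃ w ∈ mu e, 1 < dist w 1 := by
  have h4 : e ≤ 4 * ((e + 3) / 4) ∧ 4 * ((e + 3) / 4) ≤ e + 3 := by omega
  set j := (e + 3) / 4
  refine ⟨ζm e ^ j, (mu e).pow_mem (zeta_mem_mu e) j, ?_⟩
  have he' : (0 : ℝ) < e := by positivity
  have hπ := Real.pi_pos
  have hc1 : (e : ℝ) ≤ 4 * j := by exact_mod_cast h4.1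
  have hc2 : (4 : ℝ) * j ≤ 3 * e := by
    have : 4 * j ≤ 3 * e := by omega
    exact_mod_cast this
  have hθ1 : π / 2 ≤ (j : ℝ) * (2 * π / e) := by
    have key : (j : ℝ) * (2 * π / e) - π / 2 = (π / (2 * e)) * (4 * (j : ℝ) - e) := by
      field_simp; ring
    have hfac : (0:ℝ) ≤ (π / (2 * e)) * (4 * (j : ℝ) - e) :=
      mul_nonneg (by positivity) (by linarith)
    linarith
  have hθ2 : (j : ℝ) * (2 * π / e) ≤ π + π / 2 := by
    have key : (j : ℝ) * (2 * π / e) - (π + π / 2) = (π / (2 * e)) * (4 * (j : ℝ) - 3 * e) := by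
      field_simp; ring
    have hfac : (π / (2 * e)) * (4 * (j : ℝ) - 3 * e) ≤ 0 :=
      mul_nonpos_of_nonneg_of_nonpos (by positivity) (by linarith)
    linarith
  have hcos : Real.cos ((j : ℝ) * (2 * π / e)) ≤ 0 :=
    Real.cos_nonpos_of_pi_div_two_le_of_le hθ1 hθ2
  have hw : ζm e ^ j = Circle.exp ((j : ℝ) * (2 * π / e)) := by
    rw [ζm, Circle.exp_npow]
  rw [hw]
  have hd := sq_dist_exp_one ((j : ℝ) * (2 * π / e))
  nlinarith [dist_nonneg (x := Circle.exp ((j : ℝ) * (2 * π / e))) (y := (1 : Circle))]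

lemma dist_exp_exp_le {a b : ℝ} (h : |a - b| ≤ 1) :
    dist (Circle.exp a) (Circle.exp b) ≤ 2 * |a - b| := by
  have h1 : (Circle.exp a : ℂ) - Circle.exp b
      = (Circle.exp b : ℂ) * (Complex.exp (((a - b : ℝ) : ℂ) * Complex.I) - 1) := by
    rw [mul_sub, mul_one, Circle.coe_exp, Circle.coe_exp, ← Complex.exp_add]
    congr 2
    push_cast
    ring
  rw [dist_circle_eq, h1, norm_mul, Circle.norm_coe, one_mul]
  have h2 : ‖((a - b : ℝ) : ℂ) * Complex.I‖ ≤ 1 := by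
    rw [norm_mul, Complex.norm_I, mul_one, Complex.norm_real, Real.norm_eq_abs]
    exact h
  calc ‖Complex.exp (((a - b : ℝ) : ℂ) * Complex.I) - 1‖
      ≤ 2 * ‖((a - b : ℝ) : ℂ) * Complex.I‖ := Complex.norm_exp_sub_one_le h2
    _ = 2 * |a - b| := by
        rw [norm_mul, Complex.norm_I, mul_one, Complex.norm_real, Real.norm_eq_abs]

/-- Density: eventually `mu m` meets any fixed ball. -/
lemma mu_dense (z : Circle) {ε : ℝ} (hε : 0 < ε) :
    ∀ᶠ m : ℕ in atTop, ∃ w ∈ mu m, dist w z < ε := by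
  have hπ := Real.pi_pos
  obtain ⟨N, hN⟩ := exists_nat_gt (max (4 * π) (4 * π / ε))
  filter_upwards [eventually_ge_atTop (N + 1)] with m hm
  have hmN : (N : ℝ) ≤ m := by exact_mod_cast Nat.le_of_succ_le hm
  have hm4 : 4 * π < (m : ℝ) := lt_of_lt_of_le (lt_of_le_of_lt (le_max_left _ _) hN) hmN
  have hmε : 4 * π / ε < (m : ℝ) := lt_of_lt_of_le (lt_of_le_of_lt (le_max_right _ _) hN) hmN
  have hm' : (0 : ℝ) < m := by linarith
  set θ := Complex.arg z with hθdef
  set k := ⌊θ * m / (2 * π)⌋ with hk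
  refine ⟨ζm m ^ k, (mu m).zpow_mem (zeta_mem_mu m) k, ?_⟩
  have hzeq : ζm m ^ k = Circle.exp ((k : ℝ) * (2 * π / m)) := by
    rw [ζm, Circle.exp_zpow]
  set a := (k : ℝ) * (2 * π / m) with ha
  have hk1 : ((k : ℝ)) ≤ θ * m / (2 * π) := Int.floor_le _
  have hk2 : θ * m / (2 * π) < (k : ℝ) + 1 := Int.lt_floor_add_one _
  have g1 : (k : ℝ) * (2 * π) ≤ θ * m := by
    rw [le_div_iff₀ (by linarith : (0:ℝ) < 2 * π)] at hk1
    exact hk1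
  have g2 : θ * m < ((k : ℝ) + 1) * (2 * π) := by
    rw [div_lt_iff₀ (by linarith : (0:ℝ) < 2 * π)] at hk2
    exact hk2
  have e1 : a * m = k * (2 * π) := by rw [ha]; field_simp
  have hle : a ≤ θ := by
    have h := g1; rw [← e1] at h
    exact le_of_mul_le_mul_right h hm'
  have hlt : θ - a < 2 * π / m := by
    rw [lt_div_iff₀ hm']
    nlinarith [g2, e1]
  have hpos : (0 : ℝ) < 2 * π / m := by positivity
  have habs : |a - θ| ≤ 2 * π / m := by
    rw [abs_le]; constructor <;> linarith
  have h1 : |a - θ| ≤ 1 := by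
    refine le_trans habs ?_
    rw [div_le_iff₀ hm']
    linarith
  have hz2 : z = Circle.exp θ := (Circle.exp_arg z).symm
  rw [hzeq, hz2]
  calc dist (Circle.exp a) (Circle.exp θ) ≤ 2 * |a - θ| := dist_exp_exp_le h1
    _ ≤ 2 * (2 * π / m) := by linarith
    _ < ε := by
        rw [div_lt_iff₀ hε] at hmε
        rw [show 2 * (2 * π / m) = 4 * π / m by ring, div_lt_iff₀ hm']
        nlinarith

/-! ### Topology on `ClosedSubgroups Circle` -/

def cmap : ClosedSubgroups Circle → Set Circle := fun H => ((H.1 : Subgroup Circle) : Set Circle)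

lemma isOpenX_iff {s : Set (ClosedSubgroups Circle)} :
    IsOpen s ↔ ∃ A, IsOpen[chabautyTopSet Circle] A ∧ cmap ⁻¹' A = s :=
  @isOpen_induced_iff _ _ (chabautyTopSet Circle) s cmap

lemma isOpen_W {K : Set Circle} (hK : IsCompact K) :
    IsOpen {x : ClosedSubgroups Circle | cmap x ∩ K = ∅} := by
  rw [isOpenX_iff]
  exact ⟨{S | S ∩ K = ∅},
    TopologicalSpace.isOpen_generateFrom_of_mem (Or.inl ⟨K, hK, rfl⟩), rfl⟩

lemma isOpen_V {U : Set Circle} (hU : IsOpen U) :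
    IsOpen {x : ClosedSubgroups Circle | (cmap x ∩ U).Nonempty} := by
  rw [isOpenX_iff]
  exact ⟨{S | (S ∩ U).Nonempty},
    TopologicalSpace.isOpen_generateFrom_of_mem (Or.inr ⟨U, hU, rfl⟩), rfl⟩

noncomputable def Tmu (m : ℕ) (hm : 0 < m) : ClosedSubgroups Circle :=
  ⟨mu m, (mu_finite hm).isClosed⟩

noncomputable def Ttop : ClosedSubgroups Circle :=
  ⟨⊤, by rw [Subgroup.coe_top]; exact isClosed_univ⟩

lemma subtype_ext {x y : ClosedSubgroups Circle} (h : x.1 = y.1) : x = y := Subtype.ext h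

lemma mem_cmap {z : Circle} {x : ClosedSubgroups Circle} : z ∈ cmap x ↔ z ∈ x.1 := Iff.rfl

lemma exp_one_not_mem_mu (m : ℕ) (hm : 0 < m) : Circle.exp 1 ∉ mu m := by
  intro hmem
  rw [mem_mu_iff hm] at hmem
  rw [Circle.exp_npow, mul_one] at hmem
  obtain ⟨j, hj⟩ := Circle.exp_eq_one.mp hmem
  have hj0 : j ≠ 0 := by
    rintro rfl
    simp at hj
    exact hm.ne' (by exact_mod_cast hj)
  refine irrational_pi ⟨(m : ℚ) / (2 * (j : ℚ)), ?_⟩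
  have hj' : ((j : ℝ)) ≠ 0 := Int.cast_ne_zero.mpr hj0
  push_cast
  rw [div_eq_iff (by simpa using hj')]
  linarith [hj]

lemma zeta_not_mem_proper {m k : ℕ} (hm : 0 < m) (hk : 0 < k) (hkm : k < m) :
    ζm m ∉ mu k := by
  intro hmem
  rw [mem_mu_iff hk] at hmem
  have := orderOf_dvd_of_pow_eq_one hmem
  rw [orderOf_zeta hm] at this
  exact absurd (Nat.le_of_dvd hk this) (by omega)

/-- The compact "test" set for isolating `mu m`. -/
def Km (m : ℕ) : Set Circle := (fun w : Circle => w ^ m) ⁻¹' (Metric.ball (1 : Circle) 1)ᶜ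

lemma Km_compact (m : ℕ) : IsCompact (Km m) :=
  (((Metric.isOpen_ball).isClosed_compl).preimage (continuous_pow m)).isCompact

lemma not_mem_Km {z : Circle} {m : ℕ} (h : z ^ m = 1) : z ∉ Km m := by
  simp only [Km, Set.mem_preimage, Set.mem_compl_iff, Metric.mem_ball, not_not]
  simp [h]

/-- The finite union of proper-divisor subgroups. -/
def Fm (m : ℕ) : Set Circle := ⋃ k ∈ m.properDivisors, ((mu k : Subgroup Circle) : Set Circle)

lemma Fm_finite (m : ℕ) : (Fm m).Finite :=
  Set.Finite.biUnion (Finset.finite_toSet _) fun k hk =>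
    mu_finite (Nat.pos_of_mem_properDivisors (by simpa using hk))

lemma isolated {m : ℕ} (hm : 0 < m) :
    IsOpen {x : ClosedSubgroups Circle | x = Tmu m hm} := by
  have hKey : {x : ClosedSubgroups Circle | x = Tmu m hm}
      = {x | cmap x ∩ Km m = ∅} ∩ {x | (cmap x ∩ (Fm m)ᶜ).Nonempty} := by
    ext x
    simp only [Set.mem_setOf_eq, Set.mem_inter_iff]
    constructor
    · rintro rfl
      constructor
      · rw [Set.eq_empty_iff_forall_notMem]
        rintro z ⟨hz1, hz2⟩
        have hz : z ^ m = 1 := (mem_mu_iff hm).mp (mem_cmap.mp hz1)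
        exact not_mem_Km hz hz2
      · refine ⟨ζm m, zeta_mem_mu m, ?_⟩
        intro hmem
        simp only [Fm, Set.mem_iUnion] at hmem
        obtain ⟨k, hk, hzk⟩ := hmem
        rw [Nat.mem_properDivisors] at hk
        exact zeta_not_mem_proper hm (Nat.pos_of_dvd_of_pos hk.1 hm) hk.2 hzk
    · rintro ⟨h1, h2⟩
      rw [Set.eq_empty_iff_forall_notMem] at h1
      rcases classify_s19 x.1 x.2 with htop | hfin
      · exfalso
        have hzK : Circle.exp (π / m) ∈ Km m := by
          have hpow : Circle.exp (π / m) ^ m = Circle.exp π := by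
            rw [Circle.exp_npow]
            congr 1
            field_simp
          simp only [Km, Set.mem_preimage, Set.mem_compl_iff, Metric.mem_ball, not_lt]
          rw [hpow]
          have hcoe : (Circle.exp π : ℂ) = -1 := by
            rw [Circle.coe_exp]
            exact_mod_cast Complex.exp_pi_mul_I
          rw [dist_circle_eq, hcoe, Circle.coe_one]
          norm_num
        refine h1 (Circle.exp (π / m)) ⟨mem_cmap.mpr ?_, hzK⟩
        rw [htop]
        trivial
      · -- x.1 is finite, show x = Tmu m
        have hfx : Finite x.1 := hfin.to_subtype
        have hd : 0 < Nat.card x.1 := Nat.card_pos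
        have hx1 : x.1 = mu (Nat.card x.1) := subgroup_eq_mu hfin
        -- the image subgroup under `z ↦ z ^ m` is trivial
        set Q : Subgroup Circle := Subgroup.map (powMonoidHom m) x.1 with hQ
        have hQsub : ∀ w ∈ Q, dist w (1 : Circle) < 1 := by
          rintro _ ⟨z, hz, rfl⟩
          have hzK : z ∉ Km m := fun hcon => h1 z ⟨mem_cmap.mpr hz, hcon⟩
          simpa [Km, Metric.mem_ball] using hzK
        have hQfin : ((Q : Subgroup Circle) : Set Circle).Finite := by
          rw [hQ, Subgroup.coe_map]
          exact hfin.image _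
        have hfQ : Finite Q := hQfin.to_subtype
        have hQcard : 0 < Nat.card Q := Nat.card_pos
        have hQbot : Q = ⊥ := by
          by_contra hne
          have h2le : 2 ≤ Nat.card Q := by
            have h1ne : Nat.card Q ≠ 1 := fun hcon => hne (Subgroup.card_eq_one.mp hcon)
            omega
          obtain ⟨w, hwQ, hw1⟩ := exists_far_elt h2le
          rw [← subgroup_eq_mu hQfin] at hwQ
          exact absurd (hQsub w hwQ) (by linarith)
        have hpow1 : ∀ z ∈ x.1, z ^ m = 1 := by
          intro z hz
          have hmem : powMonoidHom m z ∈ Q := Subgroup.mem_map_of_mem _ hz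
          rw [hQbot, Subgroup.mem_bot] at hmem
          exact hmem
        have hdvd : Nat.card x.1 ∣ m := by
          have hz : ζm (Nat.card x.1) ∈ mu (Nat.card x.1) := zeta_mem_mu _
          rw [← hx1] at hz
          have := orderOf_dvd_of_pow_eq_one (hpow1 _ hz)
          rwa [orderOf_zeta hd] at this
        by_cases hdm : Nat.card x.1 = m
        · exact subtype_ext (by rw [hx1, hdm]; rfl)
        · exfalso
          obtain ⟨w, hw1, hw2⟩ := h2
          refine hw2 ?_
          have hwd : w ∈ ((mu (Nat.card x.1) : Subgroup Circle) : Set Circle) := by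
            rw [← hx1]; exact mem_cmap.mp hw1
          exact Set.mem_biUnion
            (Nat.mem_properDivisors.mpr
              ⟨hdvd, lt_of_le_of_ne (Nat.le_of_dvd hm hdvd) hdm⟩) hwd
  rw [hKey]
  exact (isOpen_W (Km_compact m)).inter (isOpen_V (Fm_finite m).isClosed.isOpen_compl)

lemma cmap_Ttop : cmap Ttop = Set.univ := Subgroup.coe_top
lemma cmap_Tmu (m : ℕ) (hm : 0 < m) : cmap (Tmu m hm) = ((mu m : Subgroup Circle) : Set Circle) := rfl

open scoped Classical in
noncomputable def Fmap : ClosedSubgroups Circle → OnePoint ℕ := fun x =>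
  if h : ((x.1 : Subgroup Circle) : Set Circle).Finite then ((Nat.card x.1 - 1 : ℕ) : OnePoint ℕ)
  else OnePoint.infty

noncomputable def Ginv : OnePoint ℕ → ClosedSubgroups Circle := fun p =>
  Option.elim p Ttop (fun n => Tmu (n + 1) n.succ_pos)

@[simp] lemma Ginv_infty : Ginv (OnePoint.infty) = Ttop := rfl
@[simp] lemma Ginv_coe (n : ℕ) : Ginv ((n : OnePoint ℕ)) = Tmu (n + 1) n.succ_pos := rfl

lemma top_not_finite : ¬ (((⊤ : Subgroup Circle) : Set Circle)).Finite := by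
  rw [Subgroup.coe_top]
  exact Set.infinite_univ

lemma Fmap_Tmu (m : ℕ) (hm : 0 < m) : Fmap (Tmu m hm) = ((m - 1 : ℕ) : OnePoint ℕ) := by
  have hfin : (((Tmu m hm).1 : Subgroup Circle) : Set Circle).Finite := mu_finite hm
  rw [Fmap, dif_pos hfin]
  congr 1
  show Nat.card (mu m) - 1 = m - 1
  rw [card_mu hm]

lemma Fmap_Ttop : Fmap Ttop = OnePoint.infty := by
  rw [Fmap, dif_neg]
  exact top_not_finite

lemma x_eq_Ttop {x : ClosedSubgroups Circle} (h : x.1 = ⊤) : x = Ttop := subtype_ext h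

noncomputable def E : ClosedSubgroups Circle ≃ OnePoint ℕ where
  toFun := Fmap
  invFun := Ginv
  left_inv x := by
    rcases classify_s19 x.1 x.2 with htop | hfin
    · rw [x_eq_Ttop htop, Fmap_Ttop, Ginv_infty]
    · have hfx : Finite x.1 := hfin.to_subtype
      have hd : 0 < Nat.card x.1 := Nat.card_pos
      have hx : x = Tmu (Nat.card x.1) hd := subtype_ext (subgroup_eq_mu hfin)
      rw [hx, Fmap_Tmu, Ginv_coe]
      refine subtype_ext ?_
      show mu (Nat.card x.1 - 1 + 1) = mu (Nat.card x.1)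
      rw [Nat.sub_add_cancel hd]
  right_inv p := by
    cases p with
    | infty => exact Fmap_Ttop
    | coe n =>
      show Fmap (Ginv ((n : OnePoint ℕ))) = (n : OnePoint ℕ)
      rw [Ginv_coe, Fmap_Tmu]
      norm_num

lemma continuous_Ginv : Continuous Ginv := by
  rw [continuous_induced_rng]
  have key : @Continuous (OnePoint ℕ) (Set Circle) _ (chabautyTopSet Circle) (cmap ∘ Ginv) := by
    apply continuous_generateFrom_iff.mpr
    rintro A (⟨K, hK, rfl⟩ | ⟨U, hU, rfl⟩)
    · by_cases hinf : OnePoint.infty ∈ (cmap ∘ Ginv) ⁻¹' {S | S ∩ K = ∅}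
      · have hKe : K = ∅ := by
          have h0 : cmap (Ginv OnePoint.infty) ∩ K = ∅ := hinf
          rw [Ginv_infty, cmap_Ttop] at h0
          simpa using h0
        have huniv : (cmap ∘ Ginv) ⁻¹' {S | S ∩ K = ∅} = Set.univ := by
          ext p
          simp [hKe]
        rw [huniv]
        exact isOpen_univ
      · rw [OnePoint.isOpen_iff_of_notMem hinf]
        exact isOpen_discrete _
    · by_cases hinf : OnePoint.infty ∈ (cmap ∘ Ginv) ⁻¹' {S | (S ∩ U).Nonempty}
      · rw [OnePoint.isOpen_iff_of_mem hinf]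
        refine ⟨isClosed_discrete _, ?_⟩
        have hUne : U.Nonempty := by
          have h0 : (cmap (Ginv OnePoint.infty) ∩ U).Nonempty := hinf
          rw [Ginv_infty, cmap_Ttop] at h0
          simpa using h0
        obtain ⟨z, hz⟩ := hUne
        obtain ⟨ε, hε, hball⟩ := Metric.isOpen_iff.mp hU z hz
        have hev := mu_dense z hε
        rw [eventually_atTop] at hev
        obtain ⟨N, hN⟩ := hev
        refine Set.Finite.isCompact (Set.Finite.subset (Set.finite_Iio N) ?_)
        intro n hn
        simp only [Set.mem_compl_iff, Set.mem_preimage, Function.comp_apply] at hn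
        by_contra hcon
        simp only [Set.mem_Iio, not_lt] at hcon
        obtain ⟨w, hwmu, hwd⟩ := hN (n + 1) (by omega)
        refine hn ?_
        show (cmap (Ginv ((n : OnePoint ℕ))) ∩ U).Nonempty
        rw [Ginv_coe, cmap_Tmu]
        exact ⟨w, hwmu, hball hwd⟩
      · rw [OnePoint.isOpen_iff_of_notMem hinf]
        exact isOpen_discrete _
  exact key

lemma Fmap_finite_case {x : ClosedSubgroups Circle}
    (hfin : ((x.1 : Subgroup Circle) : Set Circle).Finite) :
    Fmap x = ((Nat.card x.1 - 1 : ℕ) : OnePoint ℕ) := by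
  rw [Fmap, dif_pos hfin]

lemma Fmap_infinite_case {x : ClosedSubgroups Circle}
    (hfin : ¬ ((x.1 : Subgroup Circle) : Set Circle).Finite) :
    Fmap x = OnePoint.infty := by
  rw [Fmap, dif_neg hfin]

lemma continuous_Fmap : Continuous Fmap := by
  rw [continuous_def]
  intro s hs
  rw [isOpen_iff_forall_mem_open]
  intro x hx
  rcases classify_s19 x.1 x.2 with htop | hfin
  · -- x = Ttop and ∞ ∈ s
    have hxT : x = Ttop := x_eq_Ttop htop
    have hinfty : OnePoint.infty ∈ s := by
      rw [← Fmap_Ttop, ← hxT]; exact hx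
    obtain ⟨hcomp, -⟩ := (OnePoint.isOpen_iff_of_mem' hinfty).mp hs
    have hfinset : (((↑) : ℕ → OnePoint ℕ) ⁻¹' s)ᶜ.Finite :=
      hcomp.finite ⟨inferInstance⟩
    set T : Set Circle :=
      ⋃ n ∈ (((↑) : ℕ → OnePoint ℕ) ⁻¹' s)ᶜ, ((mu (n + 1) : Subgroup Circle) : Set Circle)
      with hT
    have hTfin : T.Finite := hfinset.biUnion fun n _ => mu_finite n.succ_pos
    refine ⟨{y | (cmap y ∩ Tᶜ).Nonempty}, ?_, isOpen_V hTfin.isClosed.isOpen_compl, ?_⟩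
    · -- subset of preimage
      intro y hy
      rcases classify_s19 y.1 y.2 with hytop | hyfin
      · have : Fmap y = OnePoint.infty := by
          rw [x_eq_Ttop hytop, Fmap_Ttop]
        show Fmap y ∈ s
        rw [this]; exact hinfty
      · have hfy : Finite y.1 := hyfin.to_subtype
        have hdy : 0 < Nat.card y.1 := Nat.card_pos
        show Fmap y ∈ s
        rw [Fmap_finite_case hyfin]
        by_contra hcon
        have hmem : (Nat.card y.1 - 1) ∈ ((((↑) : ℕ → OnePoint ℕ)) ⁻¹' s)ᶜ := hcon
        have hsub : ((y.1 : Subgroup Circle) : Set Circle) ⊆ T := by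
          have h1 : y.1 = mu (Nat.card y.1 - 1 + 1) := by
            rw [Nat.sub_add_cancel hdy]
            exact subgroup_eq_mu hyfin
          intro w hw
          rw [hT]
          refine Set.mem_biUnion hmem ?_
          rw [← h1]
          exact hw
        obtain ⟨w, hw1, hw2⟩ := hy
        exact hw2 (hsub hw1)
    · -- x ∈ the open set
      show (cmap x ∩ Tᶜ).Nonempty
      refine ⟨Circle.exp 1, ?_, ?_⟩
      · rw [hxT, cmap_Ttop]; trivial
      · intro hmem
        rw [hT] at hmem
        simp only [Set.mem_iUnion] at hmem
        obtain ⟨n, -, hn⟩ := hmem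
        exact exp_one_not_mem_mu (n + 1) n.succ_pos hn
  · -- x is one of the isolated points
    have hfx : Finite x.1 := hfin.to_subtype
    have hd : 0 < Nat.card x.1 := Nat.card_pos
    have hxT : x = Tmu (Nat.card x.1) hd := subtype_ext (subgroup_eq_mu hfin)
    refine ⟨{y | y = Tmu (Nat.card x.1) hd}, ?_, isolated hd, by simpa using hxT⟩
    rintro y (rfl : y = _)
    rw [← hxT]
    exact hx

noncomputable def homeo : ClosedSubgroups Circle ≃ₜ OnePoint ℕ :=
  { E with
    continuous_toFun := continuous_Fmap
    continuous_invFun := continuous_Ginv }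

/-- The space of closed subgroups of the circle group `S¹`, with the Chabauty topology, is
homeomorphic to the one-point compactification of `ℕ`; moreover the finite (cyclic)
subgroups of order `n` converge to `S¹` itself as `n → ∞`. -/
theorem stmt19 :
    Nonempty (ClosedSubgroups Circle ≃ₜ OnePoint ℕ) ∧
    ∀ H : ℕ → ClosedSubgroups Circle, (∀ n, Nat.card (H n).1 = n + 1) →
      Filter.Tendsto H Filter.atTop
        (nhds (⟨⊤, by rw [Subgroup.coe_top]; exact isClosed_univ⟩ :
          ClosedSubgroups Circle)) := by
  constructor
  · exact ⟨homeo⟩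
  · intro H hcard
    have hfin : ∀ n, (((H n).1 : Subgroup Circle) : Set Circle).Finite := by
      intro n
      have h1 : Nat.card (H n).1 ≠ 0 := by rw [hcard n]; omega
      have h2 := (Nat.card_ne_zero.mp h1).2
      exact Set.finite_coe_iff.mp h2
    have hform : ∀ n, H n = Ginv ((n : OnePoint ℕ)) := by
      intro n
      rw [Ginv_coe]
      refine subtype_ext ?_
      have h := subgroup_eq_mu (hfin n)
      rw [hcard n] at h
      exact h
    have hcoe : Tendsto (fun n : ℕ => (n : OnePoint ℕ)) atTop (nhds OnePoint.infty) := by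
      have h1 : Filter.coclosedCompact ℕ = atTop := by
        rw [Filter.coclosedCompact_eq_cocompact, cocompact_eq_atTop]
      have h2 := OnePoint.tendsto_coe_infty (X := ℕ)
      rwa [h1] at h2
    have hG := (continuous_Ginv.tendsto OnePoint.infty).comp hcoe
    rw [Ginv_infty] at hG
    exact Tendsto.congr (fun n => (hform n).symm) hG
end
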